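/- arXiv:1308.2163 — 8 statements merged into one kernel-verified Lean document; each statement's English description precedes it below -/
import Mathlib

section
/- For every n ≥ 1 and every k with 0 ≤ k ≤ 3^{n-1} − 1, the triple of letters of φⁿ(2) at positions 3k, 3k+1, 3k+2 is a permutation of 123, i.e., the three letters are pairwise distinct. -/
/-- Letters: `0,1,2` represent `1,2,3`. `sigmaM` exchanges letters 1 and 2. -/
def sigmaM : Fin 3 → Fin 3
  | 0 => 1
  | 1 => 0
  | 2 => 2

/-- `rhoM` exchanges letters 2 and 3. -/
def rhoM : Fin 3 → Fin 3
  | 0 => 0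
  | 1 => 2
  | 2 => 1

/-- `phi a = σ(a) · a · ρ(a)`. -/
def phi (a : List (Fin 3)) : List (Fin 3) := a.map sigmaM ++ a ++ a.map rhoM

/-- Kurosaki word `φⁿ(2)` (the letter 2 is encoded as `1 : Fin 3`). -/
def K (n : ℕ) : List (Fin 3) := phi^[n] [1]

/-- `w` has period `p`. -/
def HasPeriod (w : List (Fin 3)) (p : ℕ) : Prop :=
  0 < p ∧ ∀ i, i + p < w.length → w[i]! = w[i + p]!

def IsLeastPeriod (w : List (Fin 3)) (p : ℕ) : Prop :=
  HasPeriod w p ∧ ∀ q, HasPeriod w q → p ≤ q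

/-- every factor has exponent at most 7/4. -/
def Avoids74 (w : List (Fin 3)) : Prop :=
  ∀ x p, x <:+: w → x ≠ [] → IsLeastPeriod x p → 4 * x.length ≤ 7 * p

/-- `w` contains no nonempty factor of the form `x ++ x`. -/
def SqFree (w : List (Fin 3)) : Prop :=
  ∀ x : List (Fin 3), x ≠ [] → ¬ (x ++ x) <:+: w

/-- the triple of `w` at positions `3k, 3k+1, 3k+2` is a permutation of `123`. -/
def TripleDistinct (w : List (Fin 3)) : Prop :=
  ∀ k, 3 * k + 2 < w.length →
    w[3 * k]! ≠ w[3 * k + 1]! ∧ w[3 * k]! ≠ w[3 * k + 2]! ∧ w[3 * k + 1]! ≠ w[3 * k + 2]!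

lemma phi_len (w : List (Fin 3)) : (phi w).length = 3 * w.length := by
  simp [phi]; ring

lemma K_succ (n : ℕ) : K (n+1) = phi (K n) := by
  simp [K, Function.iterate_succ_apply']

lemma K_len (n : ℕ) : (K n).length = 3 ^ n := by
  induction n with
  | zero => simp [K]
  | succ n ih => rw [K_succ, phi_len, ih]; ring

lemma sigma_inj : Function.Injective sigmaM := by decide
lemma rho_inj : Function.Injective rhoM := by decide

lemma get1 (w : List (Fin 3)) (i : ℕ) (h : i < w.length) :
    (phi w)[i]! = sigmaM (w[i]!) := by
  rw [getElem!_pos w i h, getElem!_pos (phi w) i (by rw [phi_len]; omega)]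
  simp only [phi, List.append_assoc]
  rw [List.getElem_append_left (by simpa using h)]
  simp

lemma get2 (w : List (Fin 3)) (i : ℕ) (h : i < w.length) :
    (phi w)[w.length + i]! = w[i]! := by
  rw [getElem!_pos w i h, getElem!_pos (phi w) _ (by rw [phi_len]; omega)]
  simp only [phi]
  rw [List.getElem_append_left (by simp; omega), List.getElem_append_right (by simp)]
  simp

lemma get3 (w : List (Fin 3)) (i : ℕ) (h : i < w.length) :
    (phi w)[2 * w.length + i]! = rhoM (w[i]!) := by
  rw [getElem!_pos w i h, getElem!_pos (phi w) _ (by rw [phi_len]; omega)]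
  simp only [phi]
  rw [List.getElem_append_right (by simp; omega)]
  simp only [List.length_append, List.length_map]
  have e : 2 * w.length + i - (w.length + w.length) = i := by omega
  simp [e]

theorem stmt1 : ∀ n : ℕ, 1 ≤ n → ∀ k : ℕ, k < 3 ^ (n - 1) →
    (K n)[3 * k]! ≠ (K n)[3 * k + 1]! ∧ (K n)[3 * k]! ≠ (K n)[3 * k + 2]! ∧
    (K n)[3 * k + 1]! ≠ (K n)[3 * k + 2]! := by
  intro n hn
  induction n, hn using Nat.le_induction with
  | base =>
    intro k hk
    interval_cases k
    decide
  | succ n hn ih =>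
    intro k hk
    simp only [Nat.add_sub_cancel] at hk
    have hlen : (K n).length = 3 ^ n := K_len n
    have h3 : 3 ^ n = 3 * 3 ^ (n-1) := by
      conv_lhs => rw [show n = (n-1) + 1 by omega]
      ring
    rw [K_succ]
    rcases lt_or_ge k (3 ^ (n-1)) with h | h
    · have hb : ∀ j, j ≤ 2 → 3 * k + j < (K n).length := by intro j hj; omega
      rw [get1 _ (3*k) (by omega), get1 _ (3*k+1) (by omega), get1 _ (3*k+2) (by omega)]
      obtain ⟨h1, h2, h3⟩ := ih k h
      exact ⟨fun he => h1 (sigma_inj he), fun he => h2 (sigma_inj he), fun he => h3 (sigma_inj he)⟩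
    · rcases lt_or_ge k (2 * 3 ^ (n-1)) with h' | h'
      · set k' := k - 3 ^ (n-1) with hk'
        have hkk : k = 3 ^ (n-1) + k' := by omega
        have hk'' : k' < 3 ^ (n-1) := by omega
        have e0 : 3 * k = (K n).length + 3 * k' := by omega
        have e1 : 3 * k + 1 = (K n).length + (3 * k' + 1) := by omega
        have e2 : 3 * k + 2 = (K n).length + (3 * k' + 2) := by omega
        rw [e0]
        simp only [Nat.add_assoc]
        rw [get2 _ (3*k') (by omega), get2 _ (3*k'+1) (by omega), get2 _ (3*k'+2) (by omega)]
        have := ih k' hk''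
        simpa using this
      · set k' := k - 2 * 3 ^ (n-1) with hk'
        have hk'' : k' < 3 ^ (n-1) := by omega
        have e0 : 3 * k = 2 * (K n).length + 3 * k' := by omega
        have e1 : 3 * k + 1 = 2 * (K n).length + (3 * k' + 1) := by omega
        have e2 : 3 * k + 2 = 2 * (K n).length + (3 * k' + 2) := by omega
        rw [e0]
        simp only [Nat.add_assoc]
        rw [get3 _ (3*k') (by omega), get3 _ (3*k'+1) (by omega), get3 _ (3*k'+2) (by omega)]
        obtain ⟨h1, h2, h3⟩ := ih k' hk''
        exact ⟨fun he => h1 (rho_inj he), fun he => h2 (rho_inj he), fun he => h3 (rho_inj he)⟩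
end

section
/- If w = w₀w₁⋯w₁₁ is a word over {1,2,3} such that each of the four blocks w₀w₁w₂, w₃w₄w₅, w₆w₇w₈, w₉w₁₀w₁₁ is a permutation of 123 and w₀ = w₃ = w₆ = w₉, then w contains a square of length 6, 9, or 12. -/
lemma key_stmt5 (a b1 c1 b2 c2 b3 c3 b4 c4 : Fin 3)
    (h1 : a ≠ b1 ∧ a ≠ c1 ∧ b1 ≠ c1)
    (h2 : a ≠ b2 ∧ a ≠ c2 ∧ b2 ≠ c2)
    (h3 : a ≠ b3 ∧ a ≠ c3 ∧ b3 ≠ c3)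
    (h4 : a ≠ b4 ∧ a ≠ c4 ∧ b4 ≠ c4) :
    (b1 = b2 ∧ c1 = c2) ∨ (b2 = b3 ∧ c2 = c3) ∨ (b3 = b4 ∧ c3 = c4) ∨
    (b1 = b3 ∧ c1 = c3 ∧ b2 = b4 ∧ c2 = c4) := by
  revert h1 h2 h3 h4; revert a b1 c1 b2 c2 b3 c3 b4 c4; decide

theorem stmt5 (w : List (Fin 3)) (hlen : w.length = 12)
    (htrip : TripleDistinct w)
    (h03 : w[0]! = w[3]!) (h06 : w[0]! = w[6]!) (h09 : w[0]! = w[9]!) :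
    ∃ x : List (Fin 3), x ≠ [] ∧ (x ++ x) <:+: w ∧
      ((x ++ x).length = 6 ∨ (x ++ x).length = 9 ∨ (x ++ x).length = 12) := by
  obtain ⟨a0,a1,a2,a3,a4,a5,a6,a7,a8,a9,a10,a11, rfl⟩ :
      ∃ a0 a1 a2 a3 a4 a5 a6 a7 a8 a9 a10 a11,
        w = [a0,a1,a2,a3,a4,a5,a6,a7,a8,a9,a10,a11] := by
    match w, hlen with
    | [a0,a1,a2,a3,a4,a5,a6,a7,a8,a9,a10,a11], _ =>
      exact ⟨_,_,_,_,_,_,_,_,_,_,_,_, rfl⟩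
  have t0 := htrip 0 (by simp)
  have t1 := htrip 1 (by simp)
  have t2 := htrip 2 (by simp)
  have t3 := htrip 3 (by simp)
  norm_num [List.getElem!_cons_zero, List.getElem!_cons_succ] at t0 t1 t2 t3 h03 h06 h09
  subst h03 h06 h09
  rcases key_stmt5 a0 a1 a2 a4 a5 a7 a8 a10 a11 t0 t1 t2 t3 with
    ⟨rfl, rfl⟩ | ⟨rfl, rfl⟩ | ⟨rfl, rfl⟩ | ⟨rfl, rfl, rfl, rfl⟩
  · exact ⟨[a0,a1,a2], by simp, ⟨[], [a0,a7,a8,a0,a10,a11], by simp⟩, by simp⟩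
  · exact ⟨[a0,a4,a5], by simp, ⟨[a0,a1,a2], [a0,a10,a11], by simp⟩, by simp⟩
  · exact ⟨[a0,a7,a8], by simp, ⟨[a0,a1,a2,a0,a4,a5], [], by simp⟩, by simp⟩
  · exact ⟨[a0,a1,a2,a0,a4,a5], by simp, ⟨[], [], by simp⟩, by simp⟩
end

section
/- For all n ≥ 1, the word φⁿ(2) avoids 7/4⁺-powers: every factor of φⁿ(2) with least period p and length ℓ satisfies ℓ/p ≤ 7/4. -/
def bindc {β : Type} (c : Fin 6 → ℕ → β) (v : List (Fin 6)) : List β :=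
  v.flatMap (fun a => [c a 0, c a 1, c a 2])

lemma bindc_nil {β : Type} (c : Fin 6 → ℕ → β) : bindc c [] = [] := rfl

lemma bindc_cons {β : Type} (c : Fin 6 → ℕ → β) (a : Fin 6) (v : List (Fin 6)) :
    bindc c (a :: v) = c a 0 :: c a 1 :: c a 2 :: bindc c v := rfl

lemma bindc_append {β : Type} (c : Fin 6 → ℕ → β) (v w : List (Fin 6)) :
    bindc c (v ++ w) = bindc c v ++ bindc c w := by
  simp [bindc]

lemma length_bindc {β : Type} (c : Fin 6 → ℕ → β) (v : List (Fin 6)) :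
    (bindc c v).length = 3 * v.length := by
  induction v with
  | nil => rfl
  | cons a v ih => simp [bindc_cons, ih]; ring

lemma get_bindc {β : Type} [Inhabited β] (c : Fin 6 → ℕ → β) (v : List (Fin 6))
    (k j : ℕ) (hk : k < v.length) (hj : j < 3) :
    (bindc c v)[3 * k + j]! = c v[k]! j := by
  induction v generalizing k with
  | nil => simp at hk
  | cons a v ih =>
    rcases k with _ | k
    · interval_cases j <;> simp [bindc_cons]
    · have h3 : 3 * (k + 1) + j = (3 * k + j) + 1 + 1 + 1 := by ring
      rw [bindc_cons, h3]
      simp only [List.getElem!_cons_succ]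
      have := ih k (by simpa using hk)
      simpa using this

lemma drop_bindc {β : Type} (c : Fin 6 → ℕ → β) (v : List (Fin 6)) (k : ℕ) :
    (bindc c v).drop (3 * k) = bindc c (v.drop k) := by
  induction v generalizing k with
  | nil => simp [bindc]
  | cons a v ih =>
    rcases k with _ | k
    · simp
    · have h3 : 3 * (k + 1) = (3 * k) + 1 + 1 + 1 := by ring
      rw [bindc_cons, h3]
      simpa using ih k

lemma take_bindc {β : Type} (c : Fin 6 → ℕ → β) (v : List (Fin 6)) (m : ℕ) :
    bindc c (v.take m) = (bindc c v).take (3 * m) := by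
  induction v generalizing m with
  | nil => simp [bindc]
  | cons a v ih =>
    rcases m with _ | m
    · simp [bindc]
    · have h3 : 3 * (m + 1) = (3 * m) + 1 + 1 + 1 := by ring
      rw [h3, List.take_succ_cons, bindc_cons, bindc_cons]
      simp only [List.take_succ_cons]
      rw [ih m]

lemma windowGet (v : List (Fin 6)) (k t n : ℕ) (ht : t < n) (hv : k + t < v.length) :
    ((v.drop k).take n)[t]! = v[k + t]! := by
  rw [getElem!_pos ((v.drop k).take n) t, getElem!_pos v (k+t) hv, List.getElem_take, List.getElem_drop]
  · simp [List.length_take, List.length_drop]; omega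

lemma windowLen (v : List (Fin 6)) (k n : ℕ) :
    ((v.drop k).take n).length = min n (v.length - k) := by
  simp

def NoBig {β : Type} [Inhabited β] (w : List β) : Prop :=
  ∀ s p ℓ, 0 < p → s + ℓ ≤ w.length →
    (∀ i, s ≤ i → i + p < s + ℓ → w[i]! = w[i + p]!) → 4 * ℓ ≤ 7 * p
def c1t : Fin 6 → ℕ → Fin 6
  | 0, 0 => 2
  | 0, 1 => 0
  | 0, 2 => 1
  | 1, 0 => 4
  | 1, 1 => 1
  | 1, 2 => 0
  | 2, 0 => 0
  | 2, 1 => 2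
  | 2, 2 => 3
  | 3, 0 => 5
  | 3, 1 => 3
  | 3, 2 => 2
  | 4, 0 => 1
  | 4, 1 => 4
  | 4, 2 => 5
  | 5, 0 => 3
  | 5, 1 => 5
  | 5, 2 => 4
  | _, _ => 0
def c2t : Fin 6 → ℕ → Fin 3
  | 0, 0 => 0
  | 0, 1 => 1
  | 0, 2 => 2
  | 1, 0 => 0
  | 1, 1 => 2
  | 1, 2 => 1
  | 2, 0 => 1
  | 2, 1 => 0
  | 2, 2 => 2
  | 3, 0 => 1
  | 3, 1 => 2
  | 3, 2 => 0
  | 4, 0 => 2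
  | 4, 1 => 0
  | 4, 2 => 1
  | 5, 0 => 2
  | 5, 1 => 1
  | 5, 2 => 0
  | _, _ => 0
def Lst : Fin 6 → Fin 6
  | 0 => 2
  | 1 => 3
  | 2 => 0
  | 3 => 1
  | 4 => 5
  | 5 => 4
def Lrt : Fin 6 → Fin 6
  | 0 => 1
  | 1 => 0
  | 2 => 4
  | 3 => 5
  | 4 => 2
  | 5 => 3
def F7L : List (List (Fin 6)) := [[],
  [0],
  [1],
  [0, 1],
  [1, 0],
  [2, 0, 1],
  [4, 1, 0],
  [0, 2, 0, 1],
  [1, 4, 1, 0],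
  [0, 1, 4, 1, 0],
  [1, 0, 2, 0, 1],
  [2, 0, 1, 4, 1, 0],
  [4, 1, 0, 2, 0, 1],
  [0, 1, 0, 2, 3, 2, 0],
  [0, 1, 0, 2, 3, 5, 3],
  [0, 1, 4, 1, 0, 1, 4],
  [0, 1, 4, 1, 0, 2, 0],
  [0, 1, 4, 5, 3, 5, 4],
  [0, 1, 4, 5, 4, 1, 0],
  [0, 2, 0, 1, 0, 2, 3],
  [0, 2, 0, 1, 4, 1, 0],
  [0, 2, 3, 2, 0, 1, 0],
  [0, 2, 3, 2, 0, 1, 4],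
  [0, 2, 3, 5, 3, 2, 0],
  [0, 2, 3, 5, 3, 2, 3],
  [1, 0, 1, 4, 5, 3, 5],
  [1, 0, 1, 4, 5, 4, 1],
  [1, 0, 2, 0, 1, 0, 2],
  [1, 0, 2, 0, 1, 4, 1],
  [1, 0, 2, 3, 2, 0, 1],
  [1, 0, 2, 3, 5, 3, 2],
  [1, 4, 1, 0, 1, 4, 5],
  [1, 4, 1, 0, 2, 0, 1],
  [1, 4, 5, 3, 5, 4, 1],
  [1, 4, 5, 3, 5, 4, 5],
  [1, 4, 5, 4, 1, 0, 1],
  [1, 4, 5, 4, 1, 0, 2],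
  [2, 0, 1, 0, 2, 3, 2],
  [2, 0, 1, 0, 2, 3, 5],
  [2, 0, 1, 4, 1, 0, 1],
  [2, 0, 1, 4, 1, 0, 2],
  [2, 0, 2, 3, 2, 0, 1],
  [2, 0, 2, 3, 5, 3, 2],
  [2, 3, 2, 0, 1, 0, 2],
  [2, 3, 2, 0, 1, 4, 1],
  [2, 3, 5, 3, 2, 0, 2],
  [2, 3, 5, 3, 2, 3, 5],
  [2, 3, 5, 4, 1, 4, 5],
  [2, 3, 5, 4, 5, 3, 2],
  [3, 2, 0, 1, 0, 2, 3],
  [3, 2, 0, 1, 4, 1, 0],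
  [3, 2, 0, 2, 3, 2, 0],
  [3, 2, 0, 2, 3, 5, 3],
  [3, 2, 3, 5, 4, 1, 4],
  [3, 2, 3, 5, 4, 5, 3],
  [3, 5, 3, 2, 0, 2, 3],
  [3, 5, 3, 2, 3, 5, 4],
  [3, 5, 4, 1, 4, 5, 3],
  [3, 5, 4, 1, 4, 5, 4],
  [3, 5, 4, 5, 3, 2, 0],
  [3, 5, 4, 5, 3, 2, 3],
  [4, 1, 0, 1, 4, 5, 3],
  [4, 1, 0, 1, 4, 5, 4],
  [4, 1, 0, 2, 0, 1, 0],
  [4, 1, 0, 2, 0, 1, 4],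
  [4, 1, 4, 5, 3, 5, 4],
  [4, 1, 4, 5, 4, 1, 0],
  [4, 5, 3, 2, 0, 2, 3],
  [4, 5, 3, 2, 3, 5, 4],
  [4, 5, 3, 5, 4, 1, 4],
  [4, 5, 3, 5, 4, 5, 3],
  [4, 5, 4, 1, 0, 1, 4],
  [4, 5, 4, 1, 0, 2, 0],
  [5, 3, 2, 0, 2, 3, 2],
  [5, 3, 2, 0, 2, 3, 5],
  [5, 3, 2, 3, 5, 4, 1],
  [5, 3, 2, 3, 5, 4, 5],
  [5, 3, 5, 4, 1, 4, 5],
  [5, 3, 5, 4, 5, 3, 2],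
  [5, 4, 1, 0, 1, 4, 5],
  [5, 4, 1, 0, 2, 0, 1],
  [5, 4, 1, 4, 5, 3, 5],
  [5, 4, 1, 4, 5, 4, 1],
  [5, 4, 5, 3, 2, 0, 2],
  [5, 4, 5, 3, 2, 3, 5]]
def F2pL : List (List (Fin 6)) := [[0, 1], [0, 2], [1, 0], [1, 4], [2, 0], [2, 3], [3, 2], [3, 5], [4, 1], [4, 5], [5, 3], [5, 4]]
def F3pL : List (List (Fin 6)) := [[0, 1, 0],
  [0, 1, 4],
  [0, 2, 0],
  [0, 2, 3],
  [1, 0, 1],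
  [1, 0, 2],
  [1, 4, 1],
  [1, 4, 5],
  [2, 0, 1],
  [2, 0, 2],
  [2, 3, 2],
  [2, 3, 5],
  [3, 2, 0],
  [3, 2, 3],
  [3, 5, 3],
  [3, 5, 4],
  [4, 1, 0],
  [4, 1, 4],
  [4, 5, 3],
  [4, 5, 4],
  [5, 3, 2],
  [5, 3, 5],
  [5, 4, 1],
  [5, 4, 5]]
def F4pL : List (List (Fin 6)) := [[0, 1, 0, 2],
  [0, 1, 4, 1],
  [0, 1, 4, 5],
  [0, 2, 0, 1],
  [0, 2, 3, 2],
  [0, 2, 3, 5],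
  [1, 0, 1, 4],
  [1, 0, 2, 0],
  [1, 0, 2, 3],
  [1, 4, 1, 0],
  [1, 4, 5, 3],
  [1, 4, 5, 4],
  [2, 0, 1, 0],
  [2, 0, 1, 4],
  [2, 0, 2, 3],
  [2, 3, 2, 0],
  [2, 3, 5, 3],
  [2, 3, 5, 4],
  [3, 2, 0, 1],
  [3, 2, 0, 2],
  [3, 2, 3, 5],
  [3, 5, 3, 2],
  [3, 5, 4, 1],
  [3, 5, 4, 5],
  [4, 1, 0, 1],
  [4, 1, 0, 2],
  [4, 1, 4, 5],
  [4, 5, 3, 2],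
  [4, 5, 3, 5],
  [4, 5, 4, 1],
  [5, 3, 2, 0],
  [5, 3, 2, 3],
  [5, 3, 5, 4],
  [5, 4, 1, 0],
  [5, 4, 1, 4],
  [5, 4, 5, 3]]

def Rp (a b : Fin 6) : Prop := [a, b] ∈ F2pL
instance : DecidablePred (fun ab : Fin 6 × Fin 6 => Rp ab.1 ab.2) := fun _ => by unfold Rp; infer_instance
instance (a b : Fin 6) : Decidable (Rp a b) := by unfold Rp; infer_instance

lemma h2aP : ∀ a b : Fin 6, c1t a 0 = c1t b 0 → c1t a 1 = c1t b 1 → a = b := by decide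
lemma h2bP : ∀ a b : Fin 6, c1t a 1 = c1t b 1 → c1t a 2 = c1t b 2 → a = b := by decide
lemma h3P : ∀ x x' y : Fin 6, Rp x y → Rp x' y → c1t x 2 = c1t x' 2 → x = x' := by decide
lemma h3'P : ∀ x y y' : Fin 6, Rp x y → Rp x y' → c1t y 0 = c1t y' 0 → y = y' := by decide
lemma h2aL : ∀ a b : Fin 6, c2t a 0 = c2t b 0 → c2t a 1 = c2t b 1 → a = b := by decide
lemma h2bL : ∀ a b : Fin 6, c2t a 1 = c2t b 1 → c2t a 2 = c2t b 2 → a = b := by decide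
lemma h3L : ∀ x x' y : Fin 6, Rp x y → Rp x' y → c2t x 2 = c2t x' 2 → x = x' := by decide
lemma h3'L : ∀ x y y' : Fin 6, Rp x y → Rp x y' → c2t y 0 = c2t y' 0 → y = y' := by decide

lemma bridge2 : ∀ f ∈ F7L, 2 ≤ f.length → f.take 2 ∈ F2pL := by decide
lemma bridge3 : ∀ f ∈ F7L, 3 ≤ f.length → f.take 3 ∈ F3pL := by decide
lemma bridge4 : ∀ f ∈ F7L, 4 ≤ f.length → f.take 4 ∈ F4pL := by decide

lemma closureF : ∀ f ∈ F7L, ∀ j ∈ [0,1,2], ((bindc c1t (f.take 3)).drop j).take 7 ∈ F7L := by decide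

lemma syncL01 : ∀ a ∈ F3pL, ∀ b ∈ F4pL, ¬ (c2t a[0]! 0 = c2t b[0]! 1 ∧ c2t a[0]! 1 = c2t b[0]! 2 ∧ c2t a[0]! 2 = c2t b[1]! 0 ∧ c2t a[1]! 0 = c2t b[1]! 1 ∧ c2t a[1]! 1 = c2t b[1]! 2 ∧ c2t a[1]! 2 = c2t b[2]! 0 ∧ c2t a[2]! 0 = c2t b[2]! 1 ∧ c2t a[2]! 1 = c2t b[2]! 2 ∧ c2t a[2]! 2 = c2t b[3]! 0) := by decide
lemma syncL02 : ∀ a ∈ F3pL, ∀ b ∈ F4pL, ¬ (c2t a[0]! 0 = c2t b[0]! 2 ∧ c2t a[0]! 1 = c2t b[1]! 0 ∧ c2t a[0]! 2 = c2t b[1]! 1 ∧ c2t a[1]! 0 = c2t b[1]! 2 ∧ c2t a[1]! 1 = c2t b[2]! 0 ∧ c2t a[1]! 2 = c2t b[2]! 1 ∧ c2t a[2]! 0 = c2t b[2]! 2 ∧ c2t a[2]! 1 = c2t b[3]! 0 ∧ c2t a[2]! 2 = c2t b[3]! 1) := by decide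
lemma syncL10 : ∀ a ∈ F4pL, ∀ b ∈ F3pL, ¬ (c2t a[0]! 1 = c2t b[0]! 0 ∧ c2t a[0]! 2 = c2t b[0]! 1 ∧ c2t a[1]! 0 = c2t b[0]! 2 ∧ c2t a[1]! 1 = c2t b[1]! 0 ∧ c2t a[1]! 2 = c2t b[1]! 1 ∧ c2t a[2]! 0 = c2t b[1]! 2 ∧ c2t a[2]! 1 = c2t b[2]! 0 ∧ c2t a[2]! 2 = c2t b[2]! 1 ∧ c2t a[3]! 0 = c2t b[2]! 2) := by decide
lemma syncL12 : ∀ a ∈ F4pL, ∀ b ∈ F4pL, ¬ (c2t a[0]! 1 = c2t b[0]! 2 ∧ c2t a[0]! 2 = c2t b[1]! 0 ∧ c2t a[1]! 0 = c2t b[1]! 1 ∧ c2t a[1]! 1 = c2t b[1]! 2 ∧ c2t a[1]! 2 = c2t b[2]! 0 ∧ c2t a[2]! 0 = c2t b[2]! 1 ∧ c2t a[2]! 1 = c2t b[2]! 2 ∧ c2t a[2]! 2 = c2t b[3]! 0 ∧ c2t a[3]! 0 = c2t b[3]! 1) := by decide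
lemma syncL20 : ∀ a ∈ F4pL, ∀ b ∈ F3pL, ¬ (c2t a[0]! 2 = c2t b[0]! 0 ∧ c2t a[1]! 0 = c2t b[0]! 1 ∧ c2t a[1]! 1 = c2t b[0]! 2 ∧ c2t a[1]! 2 = c2t b[1]! 0 ∧ c2t a[2]! 0 = c2t b[1]! 1 ∧ c2t a[2]! 1 = c2t b[1]! 2 ∧ c2t a[2]! 2 = c2t b[2]! 0 ∧ c2t a[3]! 0 = c2t b[2]! 1 ∧ c2t a[3]! 1 = c2t b[2]! 2) := by decide
lemma syncL21 : ∀ a ∈ F4pL, ∀ b ∈ F4pL, ¬ (c2t a[0]! 2 = c2t b[0]! 1 ∧ c2t a[1]! 0 = c2t b[0]! 2 ∧ c2t a[1]! 1 = c2t b[1]! 0 ∧ c2t a[1]! 2 = c2t b[1]! 1 ∧ c2t a[2]! 0 = c2t b[1]! 2 ∧ c2t a[2]! 1 = c2t b[2]! 0 ∧ c2t a[2]! 2 = c2t b[2]! 1 ∧ c2t a[3]! 0 = c2t b[2]! 2 ∧ c2t a[3]! 1 = c2t b[3]! 0) := by decide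
lemma syncP01 : ∀ a ∈ F2pL, ∀ b ∈ F2pL, ¬ (c1t a[0]! 0 = c1t b[0]! 1 ∧ c1t a[0]! 1 = c1t b[0]! 2 ∧ c1t a[0]! 2 = c1t b[1]! 0 ∧ c1t a[1]! 0 = c1t b[1]! 1) := by decide
lemma syncP02 : ∀ a ∈ F2pL, ∀ b ∈ F2pL, ¬ (c1t a[0]! 0 = c1t b[0]! 2 ∧ c1t a[0]! 1 = c1t b[1]! 0 ∧ c1t a[0]! 2 = c1t b[1]! 1 ∧ c1t a[1]! 0 = c1t b[1]! 2) := by decide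
lemma syncP10 : ∀ a ∈ F2pL, ∀ b ∈ F2pL, ¬ (c1t a[0]! 1 = c1t b[0]! 0 ∧ c1t a[0]! 2 = c1t b[0]! 1 ∧ c1t a[1]! 0 = c1t b[0]! 2 ∧ c1t a[1]! 1 = c1t b[1]! 0) := by decide
lemma syncP12 : ∀ a ∈ F2pL, ∀ b ∈ F2pL, ¬ (c1t a[0]! 1 = c1t b[0]! 2 ∧ c1t a[0]! 2 = c1t b[1]! 0 ∧ c1t a[1]! 0 = c1t b[1]! 1 ∧ c1t a[1]! 1 = c1t b[1]! 2) := by decide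
lemma syncP20 : ∀ a ∈ F2pL, ∀ b ∈ F2pL, ¬ (c1t a[0]! 2 = c1t b[0]! 0 ∧ c1t a[1]! 0 = c1t b[0]! 1 ∧ c1t a[1]! 1 = c1t b[0]! 2 ∧ c1t a[1]! 2 = c1t b[1]! 0) := by decide
lemma syncP21 : ∀ a ∈ F2pL, ∀ b ∈ F2pL, ¬ (c1t a[0]! 2 = c1t b[0]! 1 ∧ c1t a[1]! 0 = c1t b[0]! 2 ∧ c1t a[1]! 1 = c1t b[1]! 0 ∧ c1t a[1]! 2 = c1t b[1]! 1) := by decide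

lemma smallL : ∀ f ∈ F7L, ∀ p ∈ [1,2,4,5,7,8,10], ∀ s ∈ [0,1,2], ¬ (s + (7*p+4)/4 ≤ (bindc c2t f).length ∧ ∀ d < (7*p+4)/4 - p, (bindc c2t f)[s+d]! = (bindc c2t f)[s+d+p]!) := by decide
lemma smallP : ∀ f ∈ F7L, ∀ p ∈ [1,2], ∀ s ∈ [0,1,2], ¬ (s + (7*p+4)/4 ≤ (bindc c1t f).length ∧ ∀ d < (7*p+4)/4 - p, (bindc c1t f)[s+d]! = (bindc c1t f)[s+d+p]!) := by decide
def Wind (v : List (Fin 6)) : Prop := ∀ k : ℕ, (v.drop k).take 7 ∈ F7L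

theorem MAIN {β : Type} [Inhabited β] (c : Fin 6 → ℕ → β) (D : ℕ) (v : List (Fin 6))
    (hR : ∀ k, k + 1 < v.length → Rp v[k]! v[k+1]!)
    (hv : NoBig v)
    (h2a : ∀ a b : Fin 6, c a 0 = c b 0 → c a 1 = c b 1 → a = b)
    (h2b : ∀ a b : Fin 6, c a 1 = c b 1 → c a 2 = c b 2 → a = b)
    (h3 : ∀ x x' y : Fin 6, Rp x y → Rp x' y → c x 2 = c x' 2 → x = x')
    (h3' : ∀ x y y' : Fin 6, Rp x y → Rp x y' → c y 0 = c y' 0 → y = y')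
    (hsync : ∀ i i', i % 3 ≠ i' % 3 → i + D ≤ 3 * v.length → i' + D ≤ 3 * v.length →
      (∀ m, m < D → (bindc c v)[i + m]! = (bindc c v)[i' + m]!) → False)
    (hsmall : ∀ s p ℓ, 0 < p → p % 3 ≠ 0 → p ≤ ℓ → ℓ - p < D → s + ℓ ≤ 3 * v.length →
      7 * p + 1 ≤ 4 * ℓ →
      (∀ i, s ≤ i → i + p < s + ℓ → (bindc c v)[i]! = (bindc c v)[i + p]!) → False) :
    NoBig (bindc c v) := by
  intro s p ℓ hp hlen hP
  rw [length_bindc] at hlen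
  by_contra hcon
  push_neg at hcon
  have hℓp : p < ℓ := by omega
  by_cases hp3 : p % 3 = 0
  · -- aligned case: reduce to NoBig v
    obtain ⟨q, rfl⟩ : ∃ q, p = 3 * q := ⟨p / 3, by omega⟩
    have hq1 : 1 ≤ q := by omega
    have hov : ∀ k j, j < 3 → s ≤ 3*k+j → 3*k+j+3*q < s+ℓ → c v[k]! j = c v[k+q]! j := by
      intro k j hj h1 h2
      have hkb : k < v.length := by omega
      have hkb2 : k + q < v.length := by omega
      have h := hP (3*k+j) (by omega) (by omega)
      rw [show 3*k+j+3*q = 3*(k+q)+j by ring] at h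
      rw [get_bindc c v k j hkb hj, get_bindc c v (k+q) j hkb2 hj] at h
      exact h
    have eq2 : ∀ k j, j < 2 → s ≤ 3*k+j → 3*k+(j+1)+3*q < s+ℓ → v[k]! = v[k+q]! := by
      intro k j hj h1 h2
      have e1 := hov k j (by omega) h1 (by omega)
      have e2 := hov k (j+1) (by omega) (by omega) (by omega)
      interval_cases j
      · exact h2a _ _ e1 e2
      · exact h2b _ _ e1 e2
    have hr3 : 3 ≤ ℓ - 3*q := by omega
    have claim : ∀ k, s/3 ≤ k → k ≤ (s + (ℓ - 3*q) - 1)/3 → v[k]! = v[k+q]! := by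
      intro k hk0 hk1
      have hb1 : s ≤ 3*k+2 := by omega
      have hb2 : 3*k ≤ s + (ℓ - 3*q) - 1 := by omega
      by_cases hA : s ≤ 3*k ∧ 3*k+1+3*q < s + ℓ
      · exact eq2 k 0 (by omega) (by omega) (by omega)
      · by_cases hB : s = 3*k+1
        · exact eq2 k 1 (by omega) (by omega) (by omega)
        · by_cases hC : s = 3*k+2
          · have hE1 : v[k+1]! = v[k+1+q]! := eq2 (k+1) 0 (by omega) (by omega) (by omega)
            have hRa : Rp v[k]! v[k+1]! := hR k (by omega)
            have hRb : Rp v[k+q]! v[k+q+1]! := hR (k+q) (by omega)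
            rw [show k+q+1 = k+1+q by ring, ← hE1] at hRb
            exact h3 _ _ _ hRa hRb (hov k 2 (by omega) (by omega) (by omega))
          · have hs3k : s ≤ 3*k := by omega
            have hre : s + (ℓ - 3*q) = 3*k+1 := by omega
            obtain ⟨k', rfl⟩ : ∃ k', k = k'+1 := ⟨k-1, by omega⟩
            have hE1 : v[k']! = v[k'+q]! := eq2 k' 1 (by omega) (by omega) (by omega)
            have hRa : Rp v[k']! v[k'+1]! := hR k' (by omega)
            have hRb : Rp v[k'+q]! v[k'+q+1]! := hR (k'+q) (by omega)
            rw [← hE1, show k'+q+1 = k'+1+q by ring] at hRb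
            exact h3' _ _ _ hRa hRb (hov (k'+1) 0 (by omega) (by omega) (by omega))
    have hk1v : (s + (ℓ - 3*q) - 1)/3 + q < v.length := by omega
    have hfin := hv (s/3) q ((s + (ℓ - 3*q) - 1)/3 + 1 + q - s/3) hq1 (by omega)
      (fun i h1 h2 => claim i h1 (by omega))
    omega
  · -- unaligned
    by_cases hD : D ≤ ℓ - p
    · exact hsync s (s+p) (by omega) (by omega) (by omega)
        (fun m hm => by rw [show s+p+m = s+m+p by ring]; exact hP (s+m) (by omega) (by omega))
    · exact hsmall s p ℓ hp hp3 (by omega) (by omega) (by omega) (by omega)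
        (fun i h1 h2 => hP i h1 h2)
lemma Psync (v : List (Fin 6)) (hw : Wind v) :
    ∀ i i', i % 3 ≠ i' % 3 → i + 4 ≤ 3 * v.length → i' + 4 ≤ 3 * v.length →
      (∀ m, m < 4 → (bindc c1t v)[i + m]! = (bindc c1t v)[i' + m]!) → False := by
  intro i i' hne hb hb' heq
  obtain ⟨k, φ, hφ, rfl⟩ : ∃ k φ, φ < 3 ∧ i = 3*k+φ := ⟨i/3, i%3, by omega, by omega⟩
  obtain ⟨k', ψ, hψ, rfl⟩ : ∃ k' ψ, ψ < 3 ∧ i' = 3*k'+ψ := ⟨i'/3, i'%3, by omega, by omega⟩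
  have hφc : φ = 0 ∨ φ = 1 ∨ φ = 2 := by omega
  have hψc : ψ = 0 ∨ ψ = 1 ∨ ψ = 2 := by omega
  rcases hφc with rfl | rfl | rfl <;> rcases hψc with rfl | rfl | rfl
  · omega
  · have hka : k + 2 ≤ v.length := by omega
    have hkb : k' + 2 ≤ v.length := by omega
    have mema : ((v.drop k).take 2) ∈ F2pL := by
      have h1 := bridge2 _ (hw k) (by rw [windowLen]; omega)
      rwa [List.take_take] at h1
    have memb : ((v.drop k').take 2) ∈ F2pL := by
      have h1 := bridge2 _ (hw k') (by rw [windowLen]; omega)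
      rwa [List.take_take] at h1
    have e0 : c1t ((v.drop k).take 2)[0]! 0 = c1t ((v.drop k').take 2)[0]! 1 := by
      rw [windowGet v k 0 2 (by omega) (by omega), windowGet v k' 0 2 (by omega) (by omega)]
      have h := heq 0 (by omega)
      rw [show 3*k+0+0 = 3*(k+0)+0 by ring] at h
      rw [show 3*k'+1+0 = 3*(k'+0)+1 by ring] at h
      rw [get_bindc c1t v (k+0) 0 (by omega) (by omega), get_bindc c1t v (k'+0) 1 (by omega) (by omega)] at h
      exact h
    have e1 : c1t ((v.drop k).take 2)[0]! 1 = c1t ((v.drop k').take 2)[0]! 2 := by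
      rw [windowGet v k 0 2 (by omega) (by omega), windowGet v k' 0 2 (by omega) (by omega)]
      have h := heq 1 (by omega)
      rw [show 3*k+0+1 = 3*(k+0)+1 by ring] at h
      rw [show 3*k'+1+1 = 3*(k'+0)+2 by ring] at h
      rw [get_bindc c1t v (k+0) 1 (by omega) (by omega), get_bindc c1t v (k'+0) 2 (by omega) (by omega)] at h
      exact h
    have e2 : c1t ((v.drop k).take 2)[0]! 2 = c1t ((v.drop k').take 2)[1]! 0 := by
      rw [windowGet v k 0 2 (by omega) (by omega), windowGet v k' 1 2 (by omega) (by omega)]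
      have h := heq 2 (by omega)
      rw [show 3*k+0+2 = 3*(k+0)+2 by ring] at h
      rw [show 3*k'+1+2 = 3*(k'+1)+0 by ring] at h
      rw [get_bindc c1t v (k+0) 2 (by omega) (by omega), get_bindc c1t v (k'+1) 0 (by omega) (by omega)] at h
      exact h
    have e3 : c1t ((v.drop k).take 2)[1]! 0 = c1t ((v.drop k').take 2)[1]! 1 := by
      rw [windowGet v k 1 2 (by omega) (by omega), windowGet v k' 1 2 (by omega) (by omega)]
      have h := heq 3 (by omega)
      rw [show 3*k+0+3 = 3*(k+1)+0 by ring] at h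
      rw [show 3*k'+1+3 = 3*(k'+1)+1 by ring] at h
      rw [get_bindc c1t v (k+1) 0 (by omega) (by omega), get_bindc c1t v (k'+1) 1 (by omega) (by omega)] at h
      exact h
    exact syncP01 _ mema _ memb ⟨e0, e1, e2, e3⟩
  · have hka : k + 2 ≤ v.length := by omega
    have hkb : k' + 2 ≤ v.length := by omega
    have mema : ((v.drop k).take 2) ∈ F2pL := by
      have h1 := bridge2 _ (hw k) (by rw [windowLen]; omega)
      rwa [List.take_take] at h1
    have memb : ((v.drop k').take 2) ∈ F2pL := by
      have h1 := bridge2 _ (hw k') (by rw [windowLen]; omega)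
      rwa [List.take_take] at h1
    have e0 : c1t ((v.drop k).take 2)[0]! 0 = c1t ((v.drop k').take 2)[0]! 2 := by
      rw [windowGet v k 0 2 (by omega) (by omega), windowGet v k' 0 2 (by omega) (by omega)]
      have h := heq 0 (by omega)
      rw [show 3*k+0+0 = 3*(k+0)+0 by ring] at h
      rw [show 3*k'+2+0 = 3*(k'+0)+2 by ring] at h
      rw [get_bindc c1t v (k+0) 0 (by omega) (by omega), get_bindc c1t v (k'+0) 2 (by omega) (by omega)] at h
      exact h
    have e1 : c1t ((v.drop k).take 2)[0]! 1 = c1t ((v.drop k').take 2)[1]! 0 := by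
      rw [windowGet v k 0 2 (by omega) (by omega), windowGet v k' 1 2 (by omega) (by omega)]
      have h := heq 1 (by omega)
      rw [show 3*k+0+1 = 3*(k+0)+1 by ring] at h
      rw [show 3*k'+2+1 = 3*(k'+1)+0 by ring] at h
      rw [get_bindc c1t v (k+0) 1 (by omega) (by omega), get_bindc c1t v (k'+1) 0 (by omega) (by omega)] at h
      exact h
    have e2 : c1t ((v.drop k).take 2)[0]! 2 = c1t ((v.drop k').take 2)[1]! 1 := by
      rw [windowGet v k 0 2 (by omega) (by omega), windowGet v k' 1 2 (by omega) (by omega)]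
      have h := heq 2 (by omega)
      rw [show 3*k+0+2 = 3*(k+0)+2 by ring] at h
      rw [show 3*k'+2+2 = 3*(k'+1)+1 by ring] at h
      rw [get_bindc c1t v (k+0) 2 (by omega) (by omega), get_bindc c1t v (k'+1) 1 (by omega) (by omega)] at h
      exact h
    have e3 : c1t ((v.drop k).take 2)[1]! 0 = c1t ((v.drop k').take 2)[1]! 2 := by
      rw [windowGet v k 1 2 (by omega) (by omega), windowGet v k' 1 2 (by omega) (by omega)]
      have h := heq 3 (by omega)
      rw [show 3*k+0+3 = 3*(k+1)+0 by ring] at h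
      rw [show 3*k'+2+3 = 3*(k'+1)+2 by ring] at h
      rw [get_bindc c1t v (k+1) 0 (by omega) (by omega), get_bindc c1t v (k'+1) 2 (by omega) (by omega)] at h
      exact h
    exact syncP02 _ mema _ memb ⟨e0, e1, e2, e3⟩
  · have hka : k + 2 ≤ v.length := by omega
    have hkb : k' + 2 ≤ v.length := by omega
    have mema : ((v.drop k).take 2) ∈ F2pL := by
      have h1 := bridge2 _ (hw k) (by rw [windowLen]; omega)
      rwa [List.take_take] at h1
    have memb : ((v.drop k').take 2) ∈ F2pL := by
      have h1 := bridge2 _ (hw k') (by rw [windowLen]; omega)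
      rwa [List.take_take] at h1
    have e0 : c1t ((v.drop k).take 2)[0]! 1 = c1t ((v.drop k').take 2)[0]! 0 := by
      rw [windowGet v k 0 2 (by omega) (by omega), windowGet v k' 0 2 (by omega) (by omega)]
      have h := heq 0 (by omega)
      rw [show 3*k+1+0 = 3*(k+0)+1 by ring] at h
      rw [show 3*k'+0+0 = 3*(k'+0)+0 by ring] at h
      rw [get_bindc c1t v (k+0) 1 (by omega) (by omega), get_bindc c1t v (k'+0) 0 (by omega) (by omega)] at h
      exact h
    have e1 : c1t ((v.drop k).take 2)[0]! 2 = c1t ((v.drop k').take 2)[0]! 1 := by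
      rw [windowGet v k 0 2 (by omega) (by omega), windowGet v k' 0 2 (by omega) (by omega)]
      have h := heq 1 (by omega)
      rw [show 3*k+1+1 = 3*(k+0)+2 by ring] at h
      rw [show 3*k'+0+1 = 3*(k'+0)+1 by ring] at h
      rw [get_bindc c1t v (k+0) 2 (by omega) (by omega), get_bindc c1t v (k'+0) 1 (by omega) (by omega)] at h
      exact h
    have e2 : c1t ((v.drop k).take 2)[1]! 0 = c1t ((v.drop k').take 2)[0]! 2 := by
      rw [windowGet v k 1 2 (by omega) (by omega), windowGet v k' 0 2 (by omega) (by omega)]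
      have h := heq 2 (by omega)
      rw [show 3*k+1+2 = 3*(k+1)+0 by ring] at h
      rw [show 3*k'+0+2 = 3*(k'+0)+2 by ring] at h
      rw [get_bindc c1t v (k+1) 0 (by omega) (by omega), get_bindc c1t v (k'+0) 2 (by omega) (by omega)] at h
      exact h
    have e3 : c1t ((v.drop k).take 2)[1]! 1 = c1t ((v.drop k').take 2)[1]! 0 := by
      rw [windowGet v k 1 2 (by omega) (by omega), windowGet v k' 1 2 (by omega) (by omega)]
      have h := heq 3 (by omega)
      rw [show 3*k+1+3 = 3*(k+1)+1 by ring] at h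
      rw [show 3*k'+0+3 = 3*(k'+1)+0 by ring] at h
      rw [get_bindc c1t v (k+1) 1 (by omega) (by omega), get_bindc c1t v (k'+1) 0 (by omega) (by omega)] at h
      exact h
    exact syncP10 _ mema _ memb ⟨e0, e1, e2, e3⟩
  · omega
  · have hka : k + 2 ≤ v.length := by omega
    have hkb : k' + 2 ≤ v.length := by omega
    have mema : ((v.drop k).take 2) ∈ F2pL := by
      have h1 := bridge2 _ (hw k) (by rw [windowLen]; omega)
      rwa [List.take_take] at h1
    have memb : ((v.drop k').take 2) ∈ F2pL := by
      have h1 := bridge2 _ (hw k') (by rw [windowLen]; omega)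
      rwa [List.take_take] at h1
    have e0 : c1t ((v.drop k).take 2)[0]! 1 = c1t ((v.drop k').take 2)[0]! 2 := by
      rw [windowGet v k 0 2 (by omega) (by omega), windowGet v k' 0 2 (by omega) (by omega)]
      have h := heq 0 (by omega)
      rw [show 3*k+1+0 = 3*(k+0)+1 by ring] at h
      rw [show 3*k'+2+0 = 3*(k'+0)+2 by ring] at h
      rw [get_bindc c1t v (k+0) 1 (by omega) (by omega), get_bindc c1t v (k'+0) 2 (by omega) (by omega)] at h
      exact h
    have e1 : c1t ((v.drop k).take 2)[0]! 2 = c1t ((v.drop k').take 2)[1]! 0 := by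
      rw [windowGet v k 0 2 (by omega) (by omega), windowGet v k' 1 2 (by omega) (by omega)]
      have h := heq 1 (by omega)
      rw [show 3*k+1+1 = 3*(k+0)+2 by ring] at h
      rw [show 3*k'+2+1 = 3*(k'+1)+0 by ring] at h
      rw [get_bindc c1t v (k+0) 2 (by omega) (by omega), get_bindc c1t v (k'+1) 0 (by omega) (by omega)] at h
      exact h
    have e2 : c1t ((v.drop k).take 2)[1]! 0 = c1t ((v.drop k').take 2)[1]! 1 := by
      rw [windowGet v k 1 2 (by omega) (by omega), windowGet v k' 1 2 (by omega) (by omega)]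
      have h := heq 2 (by omega)
      rw [show 3*k+1+2 = 3*(k+1)+0 by ring] at h
      rw [show 3*k'+2+2 = 3*(k'+1)+1 by ring] at h
      rw [get_bindc c1t v (k+1) 0 (by omega) (by omega), get_bindc c1t v (k'+1) 1 (by omega) (by omega)] at h
      exact h
    have e3 : c1t ((v.drop k).take 2)[1]! 1 = c1t ((v.drop k').take 2)[1]! 2 := by
      rw [windowGet v k 1 2 (by omega) (by omega), windowGet v k' 1 2 (by omega) (by omega)]
      have h := heq 3 (by omega)
      rw [show 3*k+1+3 = 3*(k+1)+1 by ring] at h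
      rw [show 3*k'+2+3 = 3*(k'+1)+2 by ring] at h
      rw [get_bindc c1t v (k+1) 1 (by omega) (by omega), get_bindc c1t v (k'+1) 2 (by omega) (by omega)] at h
      exact h
    exact syncP12 _ mema _ memb ⟨e0, e1, e2, e3⟩
  · have hka : k + 2 ≤ v.length := by omega
    have hkb : k' + 2 ≤ v.length := by omega
    have mema : ((v.drop k).take 2) ∈ F2pL := by
      have h1 := bridge2 _ (hw k) (by rw [windowLen]; omega)
      rwa [List.take_take] at h1
    have memb : ((v.drop k').take 2) ∈ F2pL := by
      have h1 := bridge2 _ (hw k') (by rw [windowLen]; omega)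
      rwa [List.take_take] at h1
    have e0 : c1t ((v.drop k).take 2)[0]! 2 = c1t ((v.drop k').take 2)[0]! 0 := by
      rw [windowGet v k 0 2 (by omega) (by omega), windowGet v k' 0 2 (by omega) (by omega)]
      have h := heq 0 (by omega)
      rw [show 3*k+2+0 = 3*(k+0)+2 by ring] at h
      rw [show 3*k'+0+0 = 3*(k'+0)+0 by ring] at h
      rw [get_bindc c1t v (k+0) 2 (by omega) (by omega), get_bindc c1t v (k'+0) 0 (by omega) (by omega)] at h
      exact h
    have e1 : c1t ((v.drop k).take 2)[1]! 0 = c1t ((v.drop k').take 2)[0]! 1 := by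
      rw [windowGet v k 1 2 (by omega) (by omega), windowGet v k' 0 2 (by omega) (by omega)]
      have h := heq 1 (by omega)
      rw [show 3*k+2+1 = 3*(k+1)+0 by ring] at h
      rw [show 3*k'+0+1 = 3*(k'+0)+1 by ring] at h
      rw [get_bindc c1t v (k+1) 0 (by omega) (by omega), get_bindc c1t v (k'+0) 1 (by omega) (by omega)] at h
      exact h
    have e2 : c1t ((v.drop k).take 2)[1]! 1 = c1t ((v.drop k').take 2)[0]! 2 := by
      rw [windowGet v k 1 2 (by omega) (by omega), windowGet v k' 0 2 (by omega) (by omega)]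
      have h := heq 2 (by omega)
      rw [show 3*k+2+2 = 3*(k+1)+1 by ring] at h
      rw [show 3*k'+0+2 = 3*(k'+0)+2 by ring] at h
      rw [get_bindc c1t v (k+1) 1 (by omega) (by omega), get_bindc c1t v (k'+0) 2 (by omega) (by omega)] at h
      exact h
    have e3 : c1t ((v.drop k).take 2)[1]! 2 = c1t ((v.drop k').take 2)[1]! 0 := by
      rw [windowGet v k 1 2 (by omega) (by omega), windowGet v k' 1 2 (by omega) (by omega)]
      have h := heq 3 (by omega)
      rw [show 3*k+2+3 = 3*(k+1)+2 by ring] at h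
      rw [show 3*k'+0+3 = 3*(k'+1)+0 by ring] at h
      rw [get_bindc c1t v (k+1) 2 (by omega) (by omega), get_bindc c1t v (k'+1) 0 (by omega) (by omega)] at h
      exact h
    exact syncP20 _ mema _ memb ⟨e0, e1, e2, e3⟩
  · have hka : k + 2 ≤ v.length := by omega
    have hkb : k' + 2 ≤ v.length := by omega
    have mema : ((v.drop k).take 2) ∈ F2pL := by
      have h1 := bridge2 _ (hw k) (by rw [windowLen]; omega)
      rwa [List.take_take] at h1
    have memb : ((v.drop k').take 2) ∈ F2pL := by
      have h1 := bridge2 _ (hw k') (by rw [windowLen]; omega)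
      rwa [List.take_take] at h1
    have e0 : c1t ((v.drop k).take 2)[0]! 2 = c1t ((v.drop k').take 2)[0]! 1 := by
      rw [windowGet v k 0 2 (by omega) (by omega), windowGet v k' 0 2 (by omega) (by omega)]
      have h := heq 0 (by omega)
      rw [show 3*k+2+0 = 3*(k+0)+2 by ring] at h
      rw [show 3*k'+1+0 = 3*(k'+0)+1 by ring] at h
      rw [get_bindc c1t v (k+0) 2 (by omega) (by omega), get_bindc c1t v (k'+0) 1 (by omega) (by omega)] at h
      exact h
    have e1 : c1t ((v.drop k).take 2)[1]! 0 = c1t ((v.drop k').take 2)[0]! 2 := by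
      rw [windowGet v k 1 2 (by omega) (by omega), windowGet v k' 0 2 (by omega) (by omega)]
      have h := heq 1 (by omega)
      rw [show 3*k+2+1 = 3*(k+1)+0 by ring] at h
      rw [show 3*k'+1+1 = 3*(k'+0)+2 by ring] at h
      rw [get_bindc c1t v (k+1) 0 (by omega) (by omega), get_bindc c1t v (k'+0) 2 (by omega) (by omega)] at h
      exact h
    have e2 : c1t ((v.drop k).take 2)[1]! 1 = c1t ((v.drop k').take 2)[1]! 0 := by
      rw [windowGet v k 1 2 (by omega) (by omega), windowGet v k' 1 2 (by omega) (by omega)]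
      have h := heq 2 (by omega)
      rw [show 3*k+2+2 = 3*(k+1)+1 by ring] at h
      rw [show 3*k'+1+2 = 3*(k'+1)+0 by ring] at h
      rw [get_bindc c1t v (k+1) 1 (by omega) (by omega), get_bindc c1t v (k'+1) 0 (by omega) (by omega)] at h
      exact h
    have e3 : c1t ((v.drop k).take 2)[1]! 2 = c1t ((v.drop k').take 2)[1]! 1 := by
      rw [windowGet v k 1 2 (by omega) (by omega), windowGet v k' 1 2 (by omega) (by omega)]
      have h := heq 3 (by omega)
      rw [show 3*k+2+3 = 3*(k+1)+2 by ring] at h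
      rw [show 3*k'+1+3 = 3*(k'+1)+1 by ring] at h
      rw [get_bindc c1t v (k+1) 2 (by omega) (by omega), get_bindc c1t v (k'+1) 1 (by omega) (by omega)] at h
      exact h
    exact syncP21 _ mema _ memb ⟨e0, e1, e2, e3⟩
  · omega

lemma Lsync (v : List (Fin 6)) (hw : Wind v) :
    ∀ i i', i % 3 ≠ i' % 3 → i + 9 ≤ 3 * v.length → i' + 9 ≤ 3 * v.length →
      (∀ m, m < 9 → (bindc c2t v)[i + m]! = (bindc c2t v)[i' + m]!) → False := by
  intro i i' hne hb hb' heq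
  obtain ⟨k, φ, hφ, rfl⟩ : ∃ k φ, φ < 3 ∧ i = 3*k+φ := ⟨i/3, i%3, by omega, by omega⟩
  obtain ⟨k', ψ, hψ, rfl⟩ : ∃ k' ψ, ψ < 3 ∧ i' = 3*k'+ψ := ⟨i'/3, i'%3, by omega, by omega⟩
  have hφc : φ = 0 ∨ φ = 1 ∨ φ = 2 := by omega
  have hψc : ψ = 0 ∨ ψ = 1 ∨ ψ = 2 := by omega
  rcases hφc with rfl | rfl | rfl <;> rcases hψc with rfl | rfl | rfl
  · omega
  · have hka : k + 3 ≤ v.length := by omega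
    have hkb : k' + 4 ≤ v.length := by omega
    have mema : ((v.drop k).take 3) ∈ F3pL := by
      have h1 := bridge3 _ (hw k) (by rw [windowLen]; omega)
      rwa [List.take_take] at h1
    have memb : ((v.drop k').take 4) ∈ F4pL := by
      have h1 := bridge4 _ (hw k') (by rw [windowLen]; omega)
      rwa [List.take_take] at h1
    have e0 : c2t ((v.drop k).take 3)[0]! 0 = c2t ((v.drop k').take 4)[0]! 1 := by
      rw [windowGet v k 0 3 (by omega) (by omega), windowGet v k' 0 4 (by omega) (by omega)]
      have h := heq 0 (by omega)
      rw [show 3*k+0+0 = 3*(k+0)+0 by ring] at h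
      rw [show 3*k'+1+0 = 3*(k'+0)+1 by ring] at h
      rw [get_bindc c2t v (k+0) 0 (by omega) (by omega), get_bindc c2t v (k'+0) 1 (by omega) (by omega)] at h
      exact h
    have e1 : c2t ((v.drop k).take 3)[0]! 1 = c2t ((v.drop k').take 4)[0]! 2 := by
      rw [windowGet v k 0 3 (by omega) (by omega), windowGet v k' 0 4 (by omega) (by omega)]
      have h := heq 1 (by omega)
      rw [show 3*k+0+1 = 3*(k+0)+1 by ring] at h
      rw [show 3*k'+1+1 = 3*(k'+0)+2 by ring] at h
      rw [get_bindc c2t v (k+0) 1 (by omega) (by omega), get_bindc c2t v (k'+0) 2 (by omega) (by omega)] at h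
      exact h
    have e2 : c2t ((v.drop k).take 3)[0]! 2 = c2t ((v.drop k').take 4)[1]! 0 := by
      rw [windowGet v k 0 3 (by omega) (by omega), windowGet v k' 1 4 (by omega) (by omega)]
      have h := heq 2 (by omega)
      rw [show 3*k+0+2 = 3*(k+0)+2 by ring] at h
      rw [show 3*k'+1+2 = 3*(k'+1)+0 by ring] at h
      rw [get_bindc c2t v (k+0) 2 (by omega) (by omega), get_bindc c2t v (k'+1) 0 (by omega) (by omega)] at h
      exact h
    have e3 : c2t ((v.drop k).take 3)[1]! 0 = c2t ((v.drop k').take 4)[1]! 1 := by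
      rw [windowGet v k 1 3 (by omega) (by omega), windowGet v k' 1 4 (by omega) (by omega)]
      have h := heq 3 (by omega)
      rw [show 3*k+0+3 = 3*(k+1)+0 by ring] at h
      rw [show 3*k'+1+3 = 3*(k'+1)+1 by ring] at h
      rw [get_bindc c2t v (k+1) 0 (by omega) (by omega), get_bindc c2t v (k'+1) 1 (by omega) (by omega)] at h
      exact h
    have e4 : c2t ((v.drop k).take 3)[1]! 1 = c2t ((v.drop k').take 4)[1]! 2 := by
      rw [windowGet v k 1 3 (by omega) (by omega), windowGet v k' 1 4 (by omega) (by omega)]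
      have h := heq 4 (by omega)
      rw [show 3*k+0+4 = 3*(k+1)+1 by ring] at h
      rw [show 3*k'+1+4 = 3*(k'+1)+2 by ring] at h
      rw [get_bindc c2t v (k+1) 1 (by omega) (by omega), get_bindc c2t v (k'+1) 2 (by omega) (by omega)] at h
      exact h
    have e5 : c2t ((v.drop k).take 3)[1]! 2 = c2t ((v.drop k').take 4)[2]! 0 := by
      rw [windowGet v k 1 3 (by omega) (by omega), windowGet v k' 2 4 (by omega) (by omega)]
      have h := heq 5 (by omega)
      rw [show 3*k+0+5 = 3*(k+1)+2 by ring] at h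
      rw [show 3*k'+1+5 = 3*(k'+2)+0 by ring] at h
      rw [get_bindc c2t v (k+1) 2 (by omega) (by omega), get_bindc c2t v (k'+2) 0 (by omega) (by omega)] at h
      exact h
    have e6 : c2t ((v.drop k).take 3)[2]! 0 = c2t ((v.drop k').take 4)[2]! 1 := by
      rw [windowGet v k 2 3 (by omega) (by omega), windowGet v k' 2 4 (by omega) (by omega)]
      have h := heq 6 (by omega)
      rw [show 3*k+0+6 = 3*(k+2)+0 by ring] at h
      rw [show 3*k'+1+6 = 3*(k'+2)+1 by ring] at h
      rw [get_bindc c2t v (k+2) 0 (by omega) (by omega), get_bindc c2t v (k'+2) 1 (by omega) (by omega)] at h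
      exact h
    have e7 : c2t ((v.drop k).take 3)[2]! 1 = c2t ((v.drop k').take 4)[2]! 2 := by
      rw [windowGet v k 2 3 (by omega) (by omega), windowGet v k' 2 4 (by omega) (by omega)]
      have h := heq 7 (by omega)
      rw [show 3*k+0+7 = 3*(k+2)+1 by ring] at h
      rw [show 3*k'+1+7 = 3*(k'+2)+2 by ring] at h
      rw [get_bindc c2t v (k+2) 1 (by omega) (by omega), get_bindc c2t v (k'+2) 2 (by omega) (by omega)] at h
      exact h
    have e8 : c2t ((v.drop k).take 3)[2]! 2 = c2t ((v.drop k').take 4)[3]! 0 := by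
      rw [windowGet v k 2 3 (by omega) (by omega), windowGet v k' 3 4 (by omega) (by omega)]
      have h := heq 8 (by omega)
      rw [show 3*k+0+8 = 3*(k+2)+2 by ring] at h
      rw [show 3*k'+1+8 = 3*(k'+3)+0 by ring] at h
      rw [get_bindc c2t v (k+2) 2 (by omega) (by omega), get_bindc c2t v (k'+3) 0 (by omega) (by omega)] at h
      exact h
    exact syncL01 _ mema _ memb ⟨e0, e1, e2, e3, e4, e5, e6, e7, e8⟩
  · have hka : k + 3 ≤ v.length := by omega
    have hkb : k' + 4 ≤ v.length := by omega
    have mema : ((v.drop k).take 3) ∈ F3pL := by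
      have h1 := bridge3 _ (hw k) (by rw [windowLen]; omega)
      rwa [List.take_take] at h1
    have memb : ((v.drop k').take 4) ∈ F4pL := by
      have h1 := bridge4 _ (hw k') (by rw [windowLen]; omega)
      rwa [List.take_take] at h1
    have e0 : c2t ((v.drop k).take 3)[0]! 0 = c2t ((v.drop k').take 4)[0]! 2 := by
      rw [windowGet v k 0 3 (by omega) (by omega), windowGet v k' 0 4 (by omega) (by omega)]
      have h := heq 0 (by omega)
      rw [show 3*k+0+0 = 3*(k+0)+0 by ring] at h
      rw [show 3*k'+2+0 = 3*(k'+0)+2 by ring] at h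
      rw [get_bindc c2t v (k+0) 0 (by omega) (by omega), get_bindc c2t v (k'+0) 2 (by omega) (by omega)] at h
      exact h
    have e1 : c2t ((v.drop k).take 3)[0]! 1 = c2t ((v.drop k').take 4)[1]! 0 := by
      rw [windowGet v k 0 3 (by omega) (by omega), windowGet v k' 1 4 (by omega) (by omega)]
      have h := heq 1 (by omega)
      rw [show 3*k+0+1 = 3*(k+0)+1 by ring] at h
      rw [show 3*k'+2+1 = 3*(k'+1)+0 by ring] at h
      rw [get_bindc c2t v (k+0) 1 (by omega) (by omega), get_bindc c2t v (k'+1) 0 (by omega) (by omega)] at h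
      exact h
    have e2 : c2t ((v.drop k).take 3)[0]! 2 = c2t ((v.drop k').take 4)[1]! 1 := by
      rw [windowGet v k 0 3 (by omega) (by omega), windowGet v k' 1 4 (by omega) (by omega)]
      have h := heq 2 (by omega)
      rw [show 3*k+0+2 = 3*(k+0)+2 by ring] at h
      rw [show 3*k'+2+2 = 3*(k'+1)+1 by ring] at h
      rw [get_bindc c2t v (k+0) 2 (by omega) (by omega), get_bindc c2t v (k'+1) 1 (by omega) (by omega)] at h
      exact h
    have e3 : c2t ((v.drop k).take 3)[1]! 0 = c2t ((v.drop k').take 4)[1]! 2 := by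
      rw [windowGet v k 1 3 (by omega) (by omega), windowGet v k' 1 4 (by omega) (by omega)]
      have h := heq 3 (by omega)
      rw [show 3*k+0+3 = 3*(k+1)+0 by ring] at h
      rw [show 3*k'+2+3 = 3*(k'+1)+2 by ring] at h
      rw [get_bindc c2t v (k+1) 0 (by omega) (by omega), get_bindc c2t v (k'+1) 2 (by omega) (by omega)] at h
      exact h
    have e4 : c2t ((v.drop k).take 3)[1]! 1 = c2t ((v.drop k').take 4)[2]! 0 := by
      rw [windowGet v k 1 3 (by omega) (by omega), windowGet v k' 2 4 (by omega) (by omega)]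
      have h := heq 4 (by omega)
      rw [show 3*k+0+4 = 3*(k+1)+1 by ring] at h
      rw [show 3*k'+2+4 = 3*(k'+2)+0 by ring] at h
      rw [get_bindc c2t v (k+1) 1 (by omega) (by omega), get_bindc c2t v (k'+2) 0 (by omega) (by omega)] at h
      exact h
    have e5 : c2t ((v.drop k).take 3)[1]! 2 = c2t ((v.drop k').take 4)[2]! 1 := by
      rw [windowGet v k 1 3 (by omega) (by omega), windowGet v k' 2 4 (by omega) (by omega)]
      have h := heq 5 (by omega)
      rw [show 3*k+0+5 = 3*(k+1)+2 by ring] at h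
      rw [show 3*k'+2+5 = 3*(k'+2)+1 by ring] at h
      rw [get_bindc c2t v (k+1) 2 (by omega) (by omega), get_bindc c2t v (k'+2) 1 (by omega) (by omega)] at h
      exact h
    have e6 : c2t ((v.drop k).take 3)[2]! 0 = c2t ((v.drop k').take 4)[2]! 2 := by
      rw [windowGet v k 2 3 (by omega) (by omega), windowGet v k' 2 4 (by omega) (by omega)]
      have h := heq 6 (by omega)
      rw [show 3*k+0+6 = 3*(k+2)+0 by ring] at h
      rw [show 3*k'+2+6 = 3*(k'+2)+2 by ring] at h
      rw [get_bindc c2t v (k+2) 0 (by omega) (by omega), get_bindc c2t v (k'+2) 2 (by omega) (by omega)] at h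
      exact h
    have e7 : c2t ((v.drop k).take 3)[2]! 1 = c2t ((v.drop k').take 4)[3]! 0 := by
      rw [windowGet v k 2 3 (by omega) (by omega), windowGet v k' 3 4 (by omega) (by omega)]
      have h := heq 7 (by omega)
      rw [show 3*k+0+7 = 3*(k+2)+1 by ring] at h
      rw [show 3*k'+2+7 = 3*(k'+3)+0 by ring] at h
      rw [get_bindc c2t v (k+2) 1 (by omega) (by omega), get_bindc c2t v (k'+3) 0 (by omega) (by omega)] at h
      exact h
    have e8 : c2t ((v.drop k).take 3)[2]! 2 = c2t ((v.drop k').take 4)[3]! 1 := by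
      rw [windowGet v k 2 3 (by omega) (by omega), windowGet v k' 3 4 (by omega) (by omega)]
      have h := heq 8 (by omega)
      rw [show 3*k+0+8 = 3*(k+2)+2 by ring] at h
      rw [show 3*k'+2+8 = 3*(k'+3)+1 by ring] at h
      rw [get_bindc c2t v (k+2) 2 (by omega) (by omega), get_bindc c2t v (k'+3) 1 (by omega) (by omega)] at h
      exact h
    exact syncL02 _ mema _ memb ⟨e0, e1, e2, e3, e4, e5, e6, e7, e8⟩
  · have hka : k + 4 ≤ v.length := by omega
    have hkb : k' + 3 ≤ v.length := by omega
    have mema : ((v.drop k).take 4) ∈ F4pL := by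
      have h1 := bridge4 _ (hw k) (by rw [windowLen]; omega)
      rwa [List.take_take] at h1
    have memb : ((v.drop k').take 3) ∈ F3pL := by
      have h1 := bridge3 _ (hw k') (by rw [windowLen]; omega)
      rwa [List.take_take] at h1
    have e0 : c2t ((v.drop k).take 4)[0]! 1 = c2t ((v.drop k').take 3)[0]! 0 := by
      rw [windowGet v k 0 4 (by omega) (by omega), windowGet v k' 0 3 (by omega) (by omega)]
      have h := heq 0 (by omega)
      rw [show 3*k+1+0 = 3*(k+0)+1 by ring] at h
      rw [show 3*k'+0+0 = 3*(k'+0)+0 by ring] at h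
      rw [get_bindc c2t v (k+0) 1 (by omega) (by omega), get_bindc c2t v (k'+0) 0 (by omega) (by omega)] at h
      exact h
    have e1 : c2t ((v.drop k).take 4)[0]! 2 = c2t ((v.drop k').take 3)[0]! 1 := by
      rw [windowGet v k 0 4 (by omega) (by omega), windowGet v k' 0 3 (by omega) (by omega)]
      have h := heq 1 (by omega)
      rw [show 3*k+1+1 = 3*(k+0)+2 by ring] at h
      rw [show 3*k'+0+1 = 3*(k'+0)+1 by ring] at h
      rw [get_bindc c2t v (k+0) 2 (by omega) (by omega), get_bindc c2t v (k'+0) 1 (by omega) (by omega)] at h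
      exact h
    have e2 : c2t ((v.drop k).take 4)[1]! 0 = c2t ((v.drop k').take 3)[0]! 2 := by
      rw [windowGet v k 1 4 (by omega) (by omega), windowGet v k' 0 3 (by omega) (by omega)]
      have h := heq 2 (by omega)
      rw [show 3*k+1+2 = 3*(k+1)+0 by ring] at h
      rw [show 3*k'+0+2 = 3*(k'+0)+2 by ring] at h
      rw [get_bindc c2t v (k+1) 0 (by omega) (by omega), get_bindc c2t v (k'+0) 2 (by omega) (by omega)] at h
      exact h
    have e3 : c2t ((v.drop k).take 4)[1]! 1 = c2t ((v.drop k').take 3)[1]! 0 := by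
      rw [windowGet v k 1 4 (by omega) (by omega), windowGet v k' 1 3 (by omega) (by omega)]
      have h := heq 3 (by omega)
      rw [show 3*k+1+3 = 3*(k+1)+1 by ring] at h
      rw [show 3*k'+0+3 = 3*(k'+1)+0 by ring] at h
      rw [get_bindc c2t v (k+1) 1 (by omega) (by omega), get_bindc c2t v (k'+1) 0 (by omega) (by omega)] at h
      exact h
    have e4 : c2t ((v.drop k).take 4)[1]! 2 = c2t ((v.drop k').take 3)[1]! 1 := by
      rw [windowGet v k 1 4 (by omega) (by omega), windowGet v k' 1 3 (by omega) (by omega)]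
      have h := heq 4 (by omega)
      rw [show 3*k+1+4 = 3*(k+1)+2 by ring] at h
      rw [show 3*k'+0+4 = 3*(k'+1)+1 by ring] at h
      rw [get_bindc c2t v (k+1) 2 (by omega) (by omega), get_bindc c2t v (k'+1) 1 (by omega) (by omega)] at h
      exact h
    have e5 : c2t ((v.drop k).take 4)[2]! 0 = c2t ((v.drop k').take 3)[1]! 2 := by
      rw [windowGet v k 2 4 (by omega) (by omega), windowGet v k' 1 3 (by omega) (by omega)]
      have h := heq 5 (by omega)
      rw [show 3*k+1+5 = 3*(k+2)+0 by ring] at h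
      rw [show 3*k'+0+5 = 3*(k'+1)+2 by ring] at h
      rw [get_bindc c2t v (k+2) 0 (by omega) (by omega), get_bindc c2t v (k'+1) 2 (by omega) (by omega)] at h
      exact h
    have e6 : c2t ((v.drop k).take 4)[2]! 1 = c2t ((v.drop k').take 3)[2]! 0 := by
      rw [windowGet v k 2 4 (by omega) (by omega), windowGet v k' 2 3 (by omega) (by omega)]
      have h := heq 6 (by omega)
      rw [show 3*k+1+6 = 3*(k+2)+1 by ring] at h
      rw [show 3*k'+0+6 = 3*(k'+2)+0 by ring] at h
      rw [get_bindc c2t v (k+2) 1 (by omega) (by omega), get_bindc c2t v (k'+2) 0 (by omega) (by omega)] at h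
      exact h
    have e7 : c2t ((v.drop k).take 4)[2]! 2 = c2t ((v.drop k').take 3)[2]! 1 := by
      rw [windowGet v k 2 4 (by omega) (by omega), windowGet v k' 2 3 (by omega) (by omega)]
      have h := heq 7 (by omega)
      rw [show 3*k+1+7 = 3*(k+2)+2 by ring] at h
      rw [show 3*k'+0+7 = 3*(k'+2)+1 by ring] at h
      rw [get_bindc c2t v (k+2) 2 (by omega) (by omega), get_bindc c2t v (k'+2) 1 (by omega) (by omega)] at h
      exact h
    have e8 : c2t ((v.drop k).take 4)[3]! 0 = c2t ((v.drop k').take 3)[2]! 2 := by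
      rw [windowGet v k 3 4 (by omega) (by omega), windowGet v k' 2 3 (by omega) (by omega)]
      have h := heq 8 (by omega)
      rw [show 3*k+1+8 = 3*(k+3)+0 by ring] at h
      rw [show 3*k'+0+8 = 3*(k'+2)+2 by ring] at h
      rw [get_bindc c2t v (k+3) 0 (by omega) (by omega), get_bindc c2t v (k'+2) 2 (by omega) (by omega)] at h
      exact h
    exact syncL10 _ mema _ memb ⟨e0, e1, e2, e3, e4, e5, e6, e7, e8⟩
  · omega
  · have hka : k + 4 ≤ v.length := by omega
    have hkb : k' + 4 ≤ v.length := by omega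
    have mema : ((v.drop k).take 4) ∈ F4pL := by
      have h1 := bridge4 _ (hw k) (by rw [windowLen]; omega)
      rwa [List.take_take] at h1
    have memb : ((v.drop k').take 4) ∈ F4pL := by
      have h1 := bridge4 _ (hw k') (by rw [windowLen]; omega)
      rwa [List.take_take] at h1
    have e0 : c2t ((v.drop k).take 4)[0]! 1 = c2t ((v.drop k').take 4)[0]! 2 := by
      rw [windowGet v k 0 4 (by omega) (by omega), windowGet v k' 0 4 (by omega) (by omega)]
      have h := heq 0 (by omega)
      rw [show 3*k+1+0 = 3*(k+0)+1 by ring] at h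
      rw [show 3*k'+2+0 = 3*(k'+0)+2 by ring] at h
      rw [get_bindc c2t v (k+0) 1 (by omega) (by omega), get_bindc c2t v (k'+0) 2 (by omega) (by omega)] at h
      exact h
    have e1 : c2t ((v.drop k).take 4)[0]! 2 = c2t ((v.drop k').take 4)[1]! 0 := by
      rw [windowGet v k 0 4 (by omega) (by omega), windowGet v k' 1 4 (by omega) (by omega)]
      have h := heq 1 (by omega)
      rw [show 3*k+1+1 = 3*(k+0)+2 by ring] at h
      rw [show 3*k'+2+1 = 3*(k'+1)+0 by ring] at h
      rw [get_bindc c2t v (k+0) 2 (by omega) (by omega), get_bindc c2t v (k'+1) 0 (by omega) (by omega)] at h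
      exact h
    have e2 : c2t ((v.drop k).take 4)[1]! 0 = c2t ((v.drop k').take 4)[1]! 1 := by
      rw [windowGet v k 1 4 (by omega) (by omega), windowGet v k' 1 4 (by omega) (by omega)]
      have h := heq 2 (by omega)
      rw [show 3*k+1+2 = 3*(k+1)+0 by ring] at h
      rw [show 3*k'+2+2 = 3*(k'+1)+1 by ring] at h
      rw [get_bindc c2t v (k+1) 0 (by omega) (by omega), get_bindc c2t v (k'+1) 1 (by omega) (by omega)] at h
      exact h
    have e3 : c2t ((v.drop k).take 4)[1]! 1 = c2t ((v.drop k').take 4)[1]! 2 := by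
      rw [windowGet v k 1 4 (by omega) (by omega), windowGet v k' 1 4 (by omega) (by omega)]
      have h := heq 3 (by omega)
      rw [show 3*k+1+3 = 3*(k+1)+1 by ring] at h
      rw [show 3*k'+2+3 = 3*(k'+1)+2 by ring] at h
      rw [get_bindc c2t v (k+1) 1 (by omega) (by omega), get_bindc c2t v (k'+1) 2 (by omega) (by omega)] at h
      exact h
    have e4 : c2t ((v.drop k).take 4)[1]! 2 = c2t ((v.drop k').take 4)[2]! 0 := by
      rw [windowGet v k 1 4 (by omega) (by omega), windowGet v k' 2 4 (by omega) (by omega)]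
      have h := heq 4 (by omega)
      rw [show 3*k+1+4 = 3*(k+1)+2 by ring] at h
      rw [show 3*k'+2+4 = 3*(k'+2)+0 by ring] at h
      rw [get_bindc c2t v (k+1) 2 (by omega) (by omega), get_bindc c2t v (k'+2) 0 (by omega) (by omega)] at h
      exact h
    have e5 : c2t ((v.drop k).take 4)[2]! 0 = c2t ((v.drop k').take 4)[2]! 1 := by
      rw [windowGet v k 2 4 (by omega) (by omega), windowGet v k' 2 4 (by omega) (by omega)]
      have h := heq 5 (by omega)
      rw [show 3*k+1+5 = 3*(k+2)+0 by ring] at h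
      rw [show 3*k'+2+5 = 3*(k'+2)+1 by ring] at h
      rw [get_bindc c2t v (k+2) 0 (by omega) (by omega), get_bindc c2t v (k'+2) 1 (by omega) (by omega)] at h
      exact h
    have e6 : c2t ((v.drop k).take 4)[2]! 1 = c2t ((v.drop k').take 4)[2]! 2 := by
      rw [windowGet v k 2 4 (by omega) (by omega), windowGet v k' 2 4 (by omega) (by omega)]
      have h := heq 6 (by omega)
      rw [show 3*k+1+6 = 3*(k+2)+1 by ring] at h
      rw [show 3*k'+2+6 = 3*(k'+2)+2 by ring] at h
      rw [get_bindc c2t v (k+2) 1 (by omega) (by omega), get_bindc c2t v (k'+2) 2 (by omega) (by omega)] at h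
      exact h
    have e7 : c2t ((v.drop k).take 4)[2]! 2 = c2t ((v.drop k').take 4)[3]! 0 := by
      rw [windowGet v k 2 4 (by omega) (by omega), windowGet v k' 3 4 (by omega) (by omega)]
      have h := heq 7 (by omega)
      rw [show 3*k+1+7 = 3*(k+2)+2 by ring] at h
      rw [show 3*k'+2+7 = 3*(k'+3)+0 by ring] at h
      rw [get_bindc c2t v (k+2) 2 (by omega) (by omega), get_bindc c2t v (k'+3) 0 (by omega) (by omega)] at h
      exact h
    have e8 : c2t ((v.drop k).take 4)[3]! 0 = c2t ((v.drop k').take 4)[3]! 1 := by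
      rw [windowGet v k 3 4 (by omega) (by omega), windowGet v k' 3 4 (by omega) (by omega)]
      have h := heq 8 (by omega)
      rw [show 3*k+1+8 = 3*(k+3)+0 by ring] at h
      rw [show 3*k'+2+8 = 3*(k'+3)+1 by ring] at h
      rw [get_bindc c2t v (k+3) 0 (by omega) (by omega), get_bindc c2t v (k'+3) 1 (by omega) (by omega)] at h
      exact h
    exact syncL12 _ mema _ memb ⟨e0, e1, e2, e3, e4, e5, e6, e7, e8⟩
  · have hka : k + 4 ≤ v.length := by omega
    have hkb : k' + 3 ≤ v.length := by omega
    have mema : ((v.drop k).take 4) ∈ F4pL := by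
      have h1 := bridge4 _ (hw k) (by rw [windowLen]; omega)
      rwa [List.take_take] at h1
    have memb : ((v.drop k').take 3) ∈ F3pL := by
      have h1 := bridge3 _ (hw k') (by rw [windowLen]; omega)
      rwa [List.take_take] at h1
    have e0 : c2t ((v.drop k).take 4)[0]! 2 = c2t ((v.drop k').take 3)[0]! 0 := by
      rw [windowGet v k 0 4 (by omega) (by omega), windowGet v k' 0 3 (by omega) (by omega)]
      have h := heq 0 (by omega)
      rw [show 3*k+2+0 = 3*(k+0)+2 by ring] at h
      rw [show 3*k'+0+0 = 3*(k'+0)+0 by ring] at h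
      rw [get_bindc c2t v (k+0) 2 (by omega) (by omega), get_bindc c2t v (k'+0) 0 (by omega) (by omega)] at h
      exact h
    have e1 : c2t ((v.drop k).take 4)[1]! 0 = c2t ((v.drop k').take 3)[0]! 1 := by
      rw [windowGet v k 1 4 (by omega) (by omega), windowGet v k' 0 3 (by omega) (by omega)]
      have h := heq 1 (by omega)
      rw [show 3*k+2+1 = 3*(k+1)+0 by ring] at h
      rw [show 3*k'+0+1 = 3*(k'+0)+1 by ring] at h
      rw [get_bindc c2t v (k+1) 0 (by omega) (by omega), get_bindc c2t v (k'+0) 1 (by omega) (by omega)] at h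
      exact h
    have e2 : c2t ((v.drop k).take 4)[1]! 1 = c2t ((v.drop k').take 3)[0]! 2 := by
      rw [windowGet v k 1 4 (by omega) (by omega), windowGet v k' 0 3 (by omega) (by omega)]
      have h := heq 2 (by omega)
      rw [show 3*k+2+2 = 3*(k+1)+1 by ring] at h
      rw [show 3*k'+0+2 = 3*(k'+0)+2 by ring] at h
      rw [get_bindc c2t v (k+1) 1 (by omega) (by omega), get_bindc c2t v (k'+0) 2 (by omega) (by omega)] at h
      exact h
    have e3 : c2t ((v.drop k).take 4)[1]! 2 = c2t ((v.drop k').take 3)[1]! 0 := by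
      rw [windowGet v k 1 4 (by omega) (by omega), windowGet v k' 1 3 (by omega) (by omega)]
      have h := heq 3 (by omega)
      rw [show 3*k+2+3 = 3*(k+1)+2 by ring] at h
      rw [show 3*k'+0+3 = 3*(k'+1)+0 by ring] at h
      rw [get_bindc c2t v (k+1) 2 (by omega) (by omega), get_bindc c2t v (k'+1) 0 (by omega) (by omega)] at h
      exact h
    have e4 : c2t ((v.drop k).take 4)[2]! 0 = c2t ((v.drop k').take 3)[1]! 1 := by
      rw [windowGet v k 2 4 (by omega) (by omega), windowGet v k' 1 3 (by omega) (by omega)]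
      have h := heq 4 (by omega)
      rw [show 3*k+2+4 = 3*(k+2)+0 by ring] at h
      rw [show 3*k'+0+4 = 3*(k'+1)+1 by ring] at h
      rw [get_bindc c2t v (k+2) 0 (by omega) (by omega), get_bindc c2t v (k'+1) 1 (by omega) (by omega)] at h
      exact h
    have e5 : c2t ((v.drop k).take 4)[2]! 1 = c2t ((v.drop k').take 3)[1]! 2 := by
      rw [windowGet v k 2 4 (by omega) (by omega), windowGet v k' 1 3 (by omega) (by omega)]
      have h := heq 5 (by omega)
      rw [show 3*k+2+5 = 3*(k+2)+1 by ring] at h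
      rw [show 3*k'+0+5 = 3*(k'+1)+2 by ring] at h
      rw [get_bindc c2t v (k+2) 1 (by omega) (by omega), get_bindc c2t v (k'+1) 2 (by omega) (by omega)] at h
      exact h
    have e6 : c2t ((v.drop k).take 4)[2]! 2 = c2t ((v.drop k').take 3)[2]! 0 := by
      rw [windowGet v k 2 4 (by omega) (by omega), windowGet v k' 2 3 (by omega) (by omega)]
      have h := heq 6 (by omega)
      rw [show 3*k+2+6 = 3*(k+2)+2 by ring] at h
      rw [show 3*k'+0+6 = 3*(k'+2)+0 by ring] at h
      rw [get_bindc c2t v (k+2) 2 (by omega) (by omega), get_bindc c2t v (k'+2) 0 (by omega) (by omega)] at h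
      exact h
    have e7 : c2t ((v.drop k).take 4)[3]! 0 = c2t ((v.drop k').take 3)[2]! 1 := by
      rw [windowGet v k 3 4 (by omega) (by omega), windowGet v k' 2 3 (by omega) (by omega)]
      have h := heq 7 (by omega)
      rw [show 3*k+2+7 = 3*(k+3)+0 by ring] at h
      rw [show 3*k'+0+7 = 3*(k'+2)+1 by ring] at h
      rw [get_bindc c2t v (k+3) 0 (by omega) (by omega), get_bindc c2t v (k'+2) 1 (by omega) (by omega)] at h
      exact h
    have e8 : c2t ((v.drop k).take 4)[3]! 1 = c2t ((v.drop k').take 3)[2]! 2 := by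
      rw [windowGet v k 3 4 (by omega) (by omega), windowGet v k' 2 3 (by omega) (by omega)]
      have h := heq 8 (by omega)
      rw [show 3*k+2+8 = 3*(k+3)+1 by ring] at h
      rw [show 3*k'+0+8 = 3*(k'+2)+2 by ring] at h
      rw [get_bindc c2t v (k+3) 1 (by omega) (by omega), get_bindc c2t v (k'+2) 2 (by omega) (by omega)] at h
      exact h
    exact syncL20 _ mema _ memb ⟨e0, e1, e2, e3, e4, e5, e6, e7, e8⟩
  · have hka : k + 4 ≤ v.length := by omega
    have hkb : k' + 4 ≤ v.length := by omega
    have mema : ((v.drop k).take 4) ∈ F4pL := by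
      have h1 := bridge4 _ (hw k) (by rw [windowLen]; omega)
      rwa [List.take_take] at h1
    have memb : ((v.drop k').take 4) ∈ F4pL := by
      have h1 := bridge4 _ (hw k') (by rw [windowLen]; omega)
      rwa [List.take_take] at h1
    have e0 : c2t ((v.drop k).take 4)[0]! 2 = c2t ((v.drop k').take 4)[0]! 1 := by
      rw [windowGet v k 0 4 (by omega) (by omega), windowGet v k' 0 4 (by omega) (by omega)]
      have h := heq 0 (by omega)
      rw [show 3*k+2+0 = 3*(k+0)+2 by ring] at h
      rw [show 3*k'+1+0 = 3*(k'+0)+1 by ring] at h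
      rw [get_bindc c2t v (k+0) 2 (by omega) (by omega), get_bindc c2t v (k'+0) 1 (by omega) (by omega)] at h
      exact h
    have e1 : c2t ((v.drop k).take 4)[1]! 0 = c2t ((v.drop k').take 4)[0]! 2 := by
      rw [windowGet v k 1 4 (by omega) (by omega), windowGet v k' 0 4 (by omega) (by omega)]
      have h := heq 1 (by omega)
      rw [show 3*k+2+1 = 3*(k+1)+0 by ring] at h
      rw [show 3*k'+1+1 = 3*(k'+0)+2 by ring] at h
      rw [get_bindc c2t v (k+1) 0 (by omega) (by omega), get_bindc c2t v (k'+0) 2 (by omega) (by omega)] at h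
      exact h
    have e2 : c2t ((v.drop k).take 4)[1]! 1 = c2t ((v.drop k').take 4)[1]! 0 := by
      rw [windowGet v k 1 4 (by omega) (by omega), windowGet v k' 1 4 (by omega) (by omega)]
      have h := heq 2 (by omega)
      rw [show 3*k+2+2 = 3*(k+1)+1 by ring] at h
      rw [show 3*k'+1+2 = 3*(k'+1)+0 by ring] at h
      rw [get_bindc c2t v (k+1) 1 (by omega) (by omega), get_bindc c2t v (k'+1) 0 (by omega) (by omega)] at h
      exact h
    have e3 : c2t ((v.drop k).take 4)[1]! 2 = c2t ((v.drop k').take 4)[1]! 1 := by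
      rw [windowGet v k 1 4 (by omega) (by omega), windowGet v k' 1 4 (by omega) (by omega)]
      have h := heq 3 (by omega)
      rw [show 3*k+2+3 = 3*(k+1)+2 by ring] at h
      rw [show 3*k'+1+3 = 3*(k'+1)+1 by ring] at h
      rw [get_bindc c2t v (k+1) 2 (by omega) (by omega), get_bindc c2t v (k'+1) 1 (by omega) (by omega)] at h
      exact h
    have e4 : c2t ((v.drop k).take 4)[2]! 0 = c2t ((v.drop k').take 4)[1]! 2 := by
      rw [windowGet v k 2 4 (by omega) (by omega), windowGet v k' 1 4 (by omega) (by omega)]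
      have h := heq 4 (by omega)
      rw [show 3*k+2+4 = 3*(k+2)+0 by ring] at h
      rw [show 3*k'+1+4 = 3*(k'+1)+2 by ring] at h
      rw [get_bindc c2t v (k+2) 0 (by omega) (by omega), get_bindc c2t v (k'+1) 2 (by omega) (by omega)] at h
      exact h
    have e5 : c2t ((v.drop k).take 4)[2]! 1 = c2t ((v.drop k').take 4)[2]! 0 := by
      rw [windowGet v k 2 4 (by omega) (by omega), windowGet v k' 2 4 (by omega) (by omega)]
      have h := heq 5 (by omega)
      rw [show 3*k+2+5 = 3*(k+2)+1 by ring] at h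
      rw [show 3*k'+1+5 = 3*(k'+2)+0 by ring] at h
      rw [get_bindc c2t v (k+2) 1 (by omega) (by omega), get_bindc c2t v (k'+2) 0 (by omega) (by omega)] at h
      exact h
    have e6 : c2t ((v.drop k).take 4)[2]! 2 = c2t ((v.drop k').take 4)[2]! 1 := by
      rw [windowGet v k 2 4 (by omega) (by omega), windowGet v k' 2 4 (by omega) (by omega)]
      have h := heq 6 (by omega)
      rw [show 3*k+2+6 = 3*(k+2)+2 by ring] at h
      rw [show 3*k'+1+6 = 3*(k'+2)+1 by ring] at h
      rw [get_bindc c2t v (k+2) 2 (by omega) (by omega), get_bindc c2t v (k'+2) 1 (by omega) (by omega)] at h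
      exact h
    have e7 : c2t ((v.drop k).take 4)[3]! 0 = c2t ((v.drop k').take 4)[2]! 2 := by
      rw [windowGet v k 3 4 (by omega) (by omega), windowGet v k' 2 4 (by omega) (by omega)]
      have h := heq 7 (by omega)
      rw [show 3*k+2+7 = 3*(k+3)+0 by ring] at h
      rw [show 3*k'+1+7 = 3*(k'+2)+2 by ring] at h
      rw [get_bindc c2t v (k+3) 0 (by omega) (by omega), get_bindc c2t v (k'+2) 2 (by omega) (by omega)] at h
      exact h
    have e8 : c2t ((v.drop k).take 4)[3]! 1 = c2t ((v.drop k').take 4)[3]! 0 := by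
      rw [windowGet v k 3 4 (by omega) (by omega), windowGet v k' 3 4 (by omega) (by omega)]
      have h := heq 8 (by omega)
      rw [show 3*k+2+8 = 3*(k+3)+1 by ring] at h
      rw [show 3*k'+1+8 = 3*(k'+3)+0 by ring] at h
      rw [get_bindc c2t v (k+3) 1 (by omega) (by omega), get_bindc c2t v (k'+3) 0 (by omega) (by omega)] at h
      exact h
    exact syncL21 _ mema _ memb ⟨e0, e1, e2, e3, e4, e5, e6, e7, e8⟩
  · omega
lemma pair_mem : ∀ g ∈ F2pL, Rp g[0]! g[1]! := by decide

lemma windR (v : List (Fin 6)) (hw : Wind v) :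
    ∀ k, k + 1 < v.length → Rp v[k]! v[k+1]! := by
  intro k hk
  have mem : ((v.drop k).take 2) ∈ F2pL := by
    have h1 := bridge2 _ (hw k) (by rw [windowLen]; omega)
    rwa [List.take_take] at h1
  have h := pair_mem _ mem
  rwa [windowGet v k 0 2 (by omega) (by omega), windowGet v k 1 2 (by omega) (by omega)] at h

lemma take7_of_take9 {β : Type} (W : List β) (j : ℕ) (hj : j < 3) :
    ((W.take 9).drop j).take 7 = (W.drop j).take 7 := by
  rw [List.drop_take]
  rw [List.take_take]
  congr 1
  omega

lemma windStep (v : List (Fin 6)) (hw : Wind v) : Wind (bindc c1t v) := by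
  intro m
  obtain ⟨k, j, hj, rfl⟩ : ∃ k j, j < 3 ∧ m = 3*k+j := ⟨m/3, m%3, by omega, by omega⟩
  have e1 : ((bindc c1t v).drop (3*k+j)).take 7
      = ((bindc c1t (((v.drop k).take 7).take 3)).drop j).take 7 := by
    rw [show (3:ℕ)*k+j = 3*k+j from rfl, ← List.drop_drop, drop_bindc]
    rw [List.take_take, show min 3 7 = 3 by norm_num, take_bindc]
    rw [show (3:ℕ)*3 = 9 by norm_num, take7_of_take9 _ j hj]
  rw [e1]
  exact closureF _ (hw k) j (by interval_cases j <;> simp)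

lemma windowBind {β : Type} [Inhabited β] (c : Fin 6 → ℕ → β) (v : List (Fin 6)) (k0 t : ℕ)
    (ht : 3*k0 + t < 3 * v.length) (ht2 : t < 21) :
    (bindc c ((v.drop k0).take 7))[t]! = (bindc c v)[3*k0 + t]! := by
  rw [take_bindc, ← drop_bindc]
  rw [getElem!_pos _ _ (by simp [length_bindc]; omega),
      getElem!_pos _ _ (by rw [length_bindc]; omega)]
  rw [List.getElem_take, List.getElem_drop]

lemma lenBindWindow {β : Type} (c : Fin 6 → ℕ → β) (v : List (Fin 6)) (k0 : ℕ) :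
    (bindc c ((v.drop k0).take 7)).length = 3 * min 7 (v.length - k0) := by
  rw [length_bindc, windowLen]

lemma LNBsmall (v : List (Fin 6)) (hw : Wind v) :
    ∀ s p ℓ, 0 < p → p % 3 ≠ 0 → p ≤ ℓ → ℓ - p < 9 → s + ℓ ≤ 3 * v.length →
      7 * p + 1 ≤ 4 * ℓ →
      (∀ i, s ≤ i → i + p < s + ℓ → (bindc c2t v)[i]! = (bindc c2t v)[i + p]!) → False := by
  intro s p ℓ hp hp3 hpl hr hlen hbig hper
  have hpb : p ≤ 10 := by omega
  have hpmem : p ∈ [1,2,4,5,7,8,10] := by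
    simp only [List.mem_cons, List.mem_singleton]
    omega
  obtain ⟨k0, s', hs', rfl⟩ : ∃ k0 s', s' < 3 ∧ s = 3*k0+s' := ⟨s/3, s%3, by omega, by omega⟩
  have hsmem : s' ∈ [0,1,2] := by
    simp only [List.mem_cons, List.mem_singleton]
    omega
  have hlm : (7*p+4)/4 ≤ ℓ := by omega
  apply smallL _ (hw k0) p hpmem s' hsmem
  constructor
  · rw [lenBindWindow]
    omega
  · intro d hd
    rw [windowBind c2t v k0 (s'+d) (by omega) (by omega),
        windowBind c2t v k0 (s'+d+p) (by omega) (by omega)]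
    rw [show 3*k0+(s'+d) = 3*k0+s'+d by ring, show 3*k0+(s'+d+p) = (3*k0+s'+d)+p by ring]
    exact hper (3*k0+s'+d) (by omega) (by omega)

lemma PNBsmall (v : List (Fin 6)) (hw : Wind v) :
    ∀ s p ℓ, 0 < p → p % 3 ≠ 0 → p ≤ ℓ → ℓ - p < 4 → s + ℓ ≤ 3 * v.length →
      7 * p + 1 ≤ 4 * ℓ →
      (∀ i, s ≤ i → i + p < s + ℓ → (bindc c1t v)[i]! = (bindc c1t v)[i + p]!) → False := by
  intro s p ℓ hp hp3 hpl hr hlen hbig hper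
  have hpb : p ≤ 3 := by omega
  have hpmem : p ∈ [1,2] := by
    simp only [List.mem_cons, List.mem_singleton]
    omega
  obtain ⟨k0, s', hs', rfl⟩ : ∃ k0 s', s' < 3 ∧ s = 3*k0+s' := ⟨s/3, s%3, by omega, by omega⟩
  have hsmem : s' ∈ [0,1,2] := by
    simp only [List.mem_cons, List.mem_singleton]
    omega
  have hlm : (7*p+4)/4 ≤ ℓ := by omega
  apply smallP _ (hw k0) p hpmem s' hsmem
  constructor
  · rw [lenBindWindow]
    omega
  · intro d hd
    rw [windowBind c1t v k0 (s'+d) (by omega) (by omega),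
        windowBind c1t v k0 (s'+d+p) (by omega) (by omega)]
    rw [show 3*k0+(s'+d) = 3*k0+s'+d by ring, show 3*k0+(s'+d+p) = (3*k0+s'+d)+p by ring]
    exact hper (3*k0+s'+d) (by omega) (by omega)
def Useq : ℕ → List (Fin 6)
  | 0 => [0]
  | n+1 => bindc c1t (Useq n)

lemma LsC2 : ∀ a : Fin 6, c2t (Lst a) 0 = sigmaM (c2t a 0) ∧
    c2t (Lst a) 1 = sigmaM (c2t a 1) ∧ c2t (Lst a) 2 = sigmaM (c2t a 2) := by decide

lemma LrC2 : ∀ a : Fin 6, c2t (Lrt a) 0 = rhoM (c2t a 0) ∧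
    c2t (Lrt a) 1 = rhoM (c2t a 1) ∧ c2t (Lrt a) 2 = rhoM (c2t a 2) := by decide

lemma LsC1 : ∀ a : Fin 6, c1t (Lst a) 0 = Lst (c1t a 0) ∧
    c1t (Lst a) 1 = Lst (c1t a 1) ∧ c1t (Lst a) 2 = Lst (c1t a 2) := by decide

lemma LrC1 : ∀ a : Fin 6, c1t (Lrt a) 0 = Lrt (c1t a 0) ∧
    c1t (Lrt a) 1 = Lrt (c1t a 1) ∧ c1t (Lrt a) 2 = Lrt (c1t a 2) := by decide

lemma map_bindc_c2s (v : List (Fin 6)) :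
    bindc c2t (v.map Lst) = (bindc c2t v).map sigmaM := by
  induction v with
  | nil => rfl
  | cons a v ih => simp [bindc_cons, ih, (LsC2 a).1, (LsC2 a).2.1, (LsC2 a).2.2]

lemma map_bindc_c2r (v : List (Fin 6)) :
    bindc c2t (v.map Lrt) = (bindc c2t v).map rhoM := by
  induction v with
  | nil => rfl
  | cons a v ih => simp [bindc_cons, ih, (LrC2 a).1, (LrC2 a).2.1, (LrC2 a).2.2]

lemma map_bindc_c1s (v : List (Fin 6)) :
    bindc c1t (v.map Lst) = (bindc c1t v).map Lst := by
  induction v with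
  | nil => rfl
  | cons a v ih => simp [bindc_cons, ih, (LsC1 a).1, (LsC1 a).2.1, (LsC1 a).2.2]

lemma map_bindc_c1r (v : List (Fin 6)) :
    bindc c1t (v.map Lrt) = (bindc c1t v).map Lrt := by
  induction v with
  | nil => rfl
  | cons a v ih => simp [bindc_cons, ih, (LrC1 a).1, (LrC1 a).2.1, (LrC1 a).2.2]

lemma swapU : ∀ n, (Useq n).map Lst ++ Useq n ++ (Useq n).map Lrt = bindc c1t (Useq n) := by
  intro n
  induction n with
  | zero => decide
  | succ n ih =>
    show (bindc c1t (Useq n)).map Lst ++ bindc c1t (Useq n) ++ (bindc c1t (Useq n)).map Lrt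
        = bindc c1t (bindc c1t (Useq n))
    rw [← map_bindc_c1s, ← map_bindc_c1r, ← bindc_append, ← bindc_append, ih]

lemma KU : ∀ n, K (n+1) = bindc c2t (Useq n) := by
  intro n
  induction n with
  | zero => decide
  | succ n ih =>
    have h1 : K (n+1+1) = phi (K (n+1)) := by
      simp [K, Function.iterate_succ_apply']
    rw [h1, ih]
    show (bindc c2t (Useq n)).map sigmaM ++ bindc c2t (Useq n) ++ (bindc c2t (Useq n)).map rhoM
        = bindc c2t (Useq (n+1))
    rw [← map_bindc_c2s, ← map_bindc_c2r, ← bindc_append, ← bindc_append, swapU n]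
    rfl

lemma invU : ∀ n, Wind (Useq n) ∧ NoBig (Useq n) := by
  intro n
  induction n with
  | zero =>
    constructor
    · intro k
      rcases k with _ | k
      · decide
      · have h : ((Useq 0).drop (k+1)).take 7 = [] := by
          show (([0] : List (Fin 6)).drop (k+1)).take 7 = []
          simp
        rw [h]
        decide
    · intro s p ℓ hp hlen _
      have : (Useq 0).length = 1 := rfl
      omega
  | succ n ih =>
    obtain ⟨hw, hnb⟩ := ih
    exact ⟨windStep _ hw,
      MAIN c1t 4 _ (windR _ hw) hnb h2aP h2bP h3P h3'P (Psync _ hw) (PNBsmall _ hw)⟩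

lemma noBigK (n : ℕ) : NoBig (bindc c2t (Useq n)) := by
  obtain ⟨hw, hnb⟩ := invU n
  exact MAIN c2t 9 _ (windR _ hw) hnb h2aL h2bL h3L h3'L (Lsync _ hw) (LNBsmall _ hw)

lemma infixGet (a x b : List (Fin 3)) (d : ℕ) (hd : d < x.length) :
    (a ++ x ++ b)[a.length + d]! = x[d]! := by
  rw [List.append_assoc]
  rw [getElem!_pos (a ++ (x ++ b)) (a.length + d) (by simp; omega), getElem!_pos x d hd]
  rw [List.getElem_append_right (by omega)]
  have h2 : a.length + d - a.length = d := by omega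
  simp only [h2]
  rw [List.getElem_append_left hd]

theorem Avoids74_of_NoBig (w : List (Fin 3)) (h : NoBig w) : Avoids74 w := by
  intro x p hinf hx hlp
  obtain ⟨⟨hp0, hper⟩, _⟩ := hlp
  by_cases hxl : x.length ≤ p
  · omega
  · obtain ⟨a, b, hab⟩ := hinf
    have hlen : a.length + x.length ≤ w.length := by
      rw [← hab]; simp
    have hfin := h a.length p x.length hp0 hlen ?_
    · exact hfin
    · intro i h1 h2
      obtain ⟨d, rfl⟩ : ∃ d, i = a.length + d := ⟨i - a.length, by omega⟩
      rw [← hab, infixGet a x b d (by omega),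
          show a.length + d + p = a.length + (d + p) by ring,
          infixGet a x b (d+p) (by omega)]
      exact hper d (by omega)

theorem stmt6 : ∀ n : ℕ, 1 ≤ n → Avoids74 (K n) := by
  intro n hn
  obtain ⟨m, rfl⟩ : ∃ m, n = m + 1 := ⟨n-1, by omega⟩
  rw [KU m]
  exact Avoids74_of_NoBig _ (noBigK m)
end

section
/- Suppose w = a₀⋯a_{m−1} is a squarefree word over {1,2,3} in which every triple a_{3k}a_{3k+1}a_{3k+2} is a permutation of 123. Then for any q with 3q+5 < m, the letters a_{3q} and a_{3q+1} are uniquely determined by a_{3q+2}, a_{3q+3}, a_{3q+4}, a_{3q+5}: if a_{3q+2} = a_{3q+4} then a_{3q+1} = a_{3q+5} and a_{3q} = a_{3q+3}. -/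
lemma infix_four (w : List (Fin 3)) (i : ℕ) (h : i + 3 < w.length) :
    [w[i]!, w[i+1]!, w[i+2]!, w[i+3]!] <:+: w := by
  have h0 : i < w.length := by omega
  have h1 : i + 1 < w.length := by omega
  have h2 : i + 2 < w.length := by omega
  have hd : w.drop i = w[i] :: w[i+1] :: w[i+2] :: w[i+3] :: w.drop (i+4) := by
    rw [List.drop_eq_getElem_cons h0, List.drop_eq_getElem_cons h1,
      List.drop_eq_getElem_cons h2, List.drop_eq_getElem_cons h]
  refine ⟨w.take i, w.drop (i+4), ?_⟩
  simp only [getElem!_pos w i h0, getElem!_pos w (i+1) h1, getElem!_pos w (i+2) h2,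
    getElem!_pos w (i+3) h]
  calc w.take i ++ [w[i], w[i+1], w[i+2], w[i+3]] ++ w.drop (i+4)
      = w.take i ++ w.drop i := by rw [hd]; simp
    _ = w := List.take_append_drop i w

theorem stmt9 (w : List (Fin 3)) (hsf : SqFree w) (htrip : TripleDistinct w)
    (q : ℕ) (hbound : 3 * q + 5 < w.length) (h : w[3 * q + 2]! = w[3 * q + 4]!) :
    w[3 * q + 1]! = w[3 * q + 5]! ∧ w[3 * q]! = w[3 * q + 3]! :=  by
  obtain ⟨h1, h2, h3⟩ := htrip q (by omega)
  have e1 : 3 * (q + 1) = 3 * q + 3 := by ring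
  obtain ⟨h4, h5, h6⟩ := htrip (q + 1) (by omega)
  rw [e1] at h4 h5 h6
  have hnd : w[3 * q + 3]! ≠ w[3 * q + 1]! := by
    intro hbd
    apply hsf [w[3 * q + 1]!, w[3 * q + 2]!] (by simp)
    have := infix_four w (3 * q + 1) (by omega)
    have e2 : 3 * q + 1 + 1 = 3 * q + 2 := by ring
    have e3 : 3 * q + 1 + 2 = 3 * q + 3 := by ring
    have e4 : 3 * q + 1 + 3 = 3 * q + 4 := by ring
    rw [e2, e3, e4] at this
    simpa [← hbd, ← h] using this
  revert h h1 h2 h3 h4 h5 h6 hnd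
  generalize w[3 * q]! = a
  generalize w[3 * q + 1]! = b
  generalize w[3 * q + 2]! = c
  generalize w[3 * q + 3]! = d
  generalize w[3 * q + 4]! = e
  generalize w[3 * q + 5]! = f
  revert a b c d e f
  decide
end

section
/- If w = a₀⋯a_{m−1} contains a 7/4⁺-power xyx occurring with x starting at positions p and p+s where p ≡ 1 (mod 3), s ≡ 0 (mod 3), |x| = r, r/s > 3/4, and every triple a_{3k}a_{3k+1}a_{3k+2} of w is a permutation of 123, then w also contains a 7/4⁺-power with the same period s starting at position p − 1. -/
theorem stmt11 (w : List (Fin 3)) (htrip : TripleDistinct w) (p s r : ℕ)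
    (hp : p % 3 = 1) (hs : s % 3 = 0) (hrs : r ≤ s) (hexp : 4 * r > 3 * s)
    (hbound : p + s + r ≤ w.length)
    (hrep : ∀ i, i < r → w[p + i]! = w[p + s + i]!) :
    (∀ i, i < r + 1 → w[(p - 1) + i]! = w[(p - 1) + s + i]!) ∧ 4 * (r + 1) > 3 * s := by
  have hp1 : 1 ≤ p := by omega
  have hr3 : 3 ≤ r := by omega
  obtain ⟨h1a, h1b, h1c⟩ := htrip (p / 3) (by omega)
  obtain ⟨h2a, h2b, h2c⟩ := htrip ((p + s) / 3) (by omega)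
  have e2 : 3 * (p / 3) + 2 = p + 1 := by omega
  have e1 : 3 * (p / 3) + 1 = p := by omega
  have e0 : 3 * (p / 3) = p - 1 := by omega
  have f2 : 3 * ((p + s) / 3) + 2 = p + s + 1 := by omega
  have f1 : 3 * ((p + s) / 3) + 1 = p + s := by omega
  have f0 : 3 * ((p + s) / 3) = (p - 1) + s := by omega
  have g1 : p - 1 + 1 = p := by omega
  have g2 : p - 1 + 2 = p + 1 := by omega
  have g3 : p - 1 + s + 1 = p + s := by omega
  have g4 : p - 1 + s + 2 = p + s + 1 := by omega
  simp only [e2, e1, e0, g1, g2] at h1a h1b h1c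
  simp only [f2, f1, f0, g3, g4] at h2a h2b h2c
  have hb : w[p]! = w[p + s]! := by simpa using hrep 0 (by omega)
  have hc : w[p + 1]! = w[p + s + 1]! := by simpa using hrep 1 (by omega)
  have key : w[p - 1]! = w[(p - 1) + s]! := by
    apply Fin.ext
    have v1 : (w[p-1]!).val ≠ (w[p]!).val := fun h => h1a (Fin.ext h)
    have v2 : (w[p-1]!).val ≠ (w[p+1]!).val := fun h => h1b (Fin.ext h)
    have v3 : (w[p]!).val ≠ (w[p+1]!).val := fun h => h1c (Fin.ext h)
    have v4 : (w[(p-1)+s]!).val ≠ (w[p+s]!).val := fun h => h2a (Fin.ext h)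
    have v5 : (w[(p-1)+s]!).val ≠ (w[p+s+1]!).val := fun h => h2b (Fin.ext h)
    have vb := congrArg Fin.val hb
    have vc := congrArg Fin.val hc
    have l1 := (w[p-1]!).isLt
    have l2 := (w[(p-1)+s]!).isLt
    have l3 := (w[p]!).isLt
    have l4 := (w[p+1]!).isLt
    omega
  refine ⟨?_, by omega⟩
  intro i hi
  rcases i with _ | j
  · simpa using key
  · have ea : p - 1 + (j + 1) = p + j := by omega
    have eb : p - 1 + s + (j + 1) = p + s + j := by omega
    rw [ea, eb]
    exact hrep j (by omega)
end

section
/- For all n ≥ 1, φⁿ(2) occurs as the middle third of φ^{n+1}(2); that is, φ^{n+1}(2) = σ(φⁿ(2)) · φⁿ(2) · ρ(φⁿ(2)), and in particular φⁿ(2) is a factor of φ^{n+1}(2) starting at position 3ⁿ. -/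
theorem stmt13 : ∀ n : ℕ, 1 ≤ n →
    K (n + 1) = (K n).map sigmaM ++ K n ++ (K n).map rhoM ∧
    (List.drop (3 ^ n) (K (n + 1))).take (3 ^ n) = K n := by
  intro n _
  have h1 : K (n + 1) = (K n).map sigmaM ++ K n ++ (K n).map rhoM := by
    show phi^[n+1] [1] = _
    rw [Function.iterate_succ_apply']; rfl
  refine ⟨h1, ?_⟩
  rw [h1, List.append_assoc, List.drop_left' (by simp [K_len]),
    List.take_left' (K_len n)]
end

section
/- Let w be a word over {1,2,3} in which every triple a_{3k}a_{3k+1}a_{3k+2} is a permutation of 123, and suppose w contains a repetition with a_{3q+i} = a_{3q+s+i} for 1 ≤ i ≤ r, where s ≡ 2 (mod 3) and r ≥ 11. Then a_{3q} = a_{3q+3} = a_{3q+6} = a_{3q+9}. -/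
lemma fin3_det : ∀ a b c d : Fin 3, a ≠ b → a ≠ c → b ≠ c → a ≠ d → b ≠ d → c = d := by decide

lemma step_lemma (w : List (Fin 3)) (htrip : TripleDistinct w) (m n : ℕ)
    (hm : 3 * m + 2 < w.length) (hn : 3 * n + 2 < w.length)
    (h1 : w[3 * m + 1]! = w[3 * n]!) (h2 : w[3 * m + 2]! = w[3 * n + 1]!) :
    w[3 * n + 2]! = w[3 * m]! := by
  obtain ⟨a1, a2, a3⟩ := htrip m hm
  obtain ⟨b1, b2, b3⟩ := htrip n hn
  rw [← h1] at b2
  rw [← h2] at b3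
  exact (fin3_det _ _ _ _ a3 a1.symm a2.symm b2 b3).symm

theorem stmt15 (w : List (Fin 3)) (htrip : TripleDistinct w) (q s r : ℕ)
    (hs : s % 3 = 2) (hr : 11 ≤ r) (hbound : 3 * q + s + r < w.length)
    (hrep : ∀ i, 1 ≤ i → i ≤ r → w[3 * q + i]! = w[3 * q + s + i]!) :
    w[3 * q]! = w[3 * q + 3]! ∧ w[3 * q]! = w[3 * q + 6]! ∧ w[3 * q]! = w[3 * q + 9]! := by
  obtain ⟨t, rfl⟩ : ∃ t, s = 3 * t + 2 := ⟨s / 3, by omega⟩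
  have key : ∀ j : ℕ, j ≤ 2 → w[3 * q + 3 * j + 3]! = w[3 * q + 3 * j]! := by
    intro j hj
    have h1 : w[3 * (q + j) + 1]! = w[3 * (q + t + 1 + j)]! := by
      have h := hrep (3 * j + 1) (by omega) (by omega)
      rw [show 3 * q + (3 * j + 1) = 3 * (q + j) + 1 by ring,
        show 3 * q + (3 * t + 2) + (3 * j + 1) = 3 * (q + t + 1 + j) by ring] at h
      exact h
    have h2 : w[3 * (q + j) + 2]! = w[3 * (q + t + 1 + j) + 1]! := by
      have h := hrep (3 * j + 2) (by omega) (by omega)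
      rw [show 3 * q + (3 * j + 2) = 3 * (q + j) + 2 by ring,
        show 3 * q + (3 * t + 2) + (3 * j + 2) = 3 * (q + t + 1 + j) + 1 by ring] at h
      exact h
    have h3 := step_lemma w htrip (q + j) (q + t + 1 + j) (by omega) (by omega) h1 h2
    have h4 := hrep (3 * j + 3) (by omega) (by omega)
    rw [show 3 * q + (3 * t + 2) + (3 * j + 3) = 3 * (q + t + 1 + j) + 2 by ring] at h4
    rw [show 3 * q + 3 * j + 3 = 3 * q + (3 * j + 3) by ring, h4, h3,
      show 3 * (q + j) = 3 * q + 3 * j by ring]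
  have k0 := key 0 (by omega)
  have k1 := key 1 (by omega)
  have k2 := key 2 (by omega)
  rw [show 3 * q + 3 * 0 + 3 = 3 * q + 3 by ring, show 3 * q + 3 * 0 = 3 * q by ring] at k0
  rw [show 3 * q + 3 * 1 + 3 = 3 * q + 6 by ring, show 3 * q + 3 * 1 = 3 * q + 3 by ring] at k1
  rw [show 3 * q + 3 * 2 + 3 = 3 * q + 9 by ring, show 3 * q + 3 * 2 = 3 * q + 6 by ring] at k2
  exact ⟨k0.symm, (k1.trans k0).symm, ((k2.trans k1).trans k0).symm⟩
end

section
/- If w is a word over {1,2,3} in which every triple at positions 3k, 3k+1, 3k+2 is a permutation of 123, and w contains a repetition of period s ≡ 0 (mod 3) and length ℓ with ℓ/s > 7/4 starting at position p ≡ 0 (mod 3) with length a multiple of 3, then the word f(w) formed by the letters of w at positions ≡ 1 (mod 3) contains a repetition of period s/3 and length ℓ/3, hence a 7/4⁺-power. -/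
theorem stmt16 (w : List (Fin 3)) (htrip : TripleDistinct w) (p s ℓ : ℕ)
    (hp : p % 3 = 0) (hs : s % 3 = 0) (hl : ℓ % 3 = 0) (hspos : 0 < s)
    (hexp : 4 * ℓ > 7 * s) (hbound : p + ℓ ≤ w.length)
    (hrep : ∀ i, i + s < ℓ → w[p + i]! = w[p + s + i]!) :
    (∀ i, i + s / 3 < ℓ / 3 →
      ((List.range (w.length / 3)).map (fun j => w[3 * j + 1]!))[p / 3 + i]! =
      ((List.range (w.length / 3)).map (fun j => w[3 * j + 1]!))[p / 3 + s / 3 + i]!) ∧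
    4 * (ℓ / 3) > 7 * (s / 3) := by
  have key : ∀ (m : ℕ) (f : ℕ → Fin 3), m < w.length / 3 →
      ((List.range (w.length / 3)).map f)[m]! = f m := by
    intro m f hm
    rw [getElem!_pos _ m (by simpa using hm)]
    simp
  constructor
  · intro i hi
    have h1 : 3 * i + s < ℓ := by omega
    have h2 : 3 * i + 1 + s < ℓ := by omega
    have hm1 : p / 3 + i < w.length / 3 := by omega
    have hm2 : p / 3 + s / 3 + i < w.length / 3 := by omega
    rw [key _ _ hm1, key _ _ hm2]
    have := hrep (3 * i + 1) h2
    have e1 : 3 * (p / 3 + i) + 1 = p + (3 * i + 1) := by omega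
    have e2 : 3 * (p / 3 + s / 3 + i) + 1 = p + s + (3 * i + 1) := by omega
    rw [e1, e2, this]
  · omega
end
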